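/- arXiv:1203.4591 — 5 statements merged into one kernel-verified Lean document; each statement's English description precedes it below -/
import Mathlib

section
/- Let f : [a,b] → ℝ be continuous on [a,b] and differentiable on (a,b), and suppose its derivative f' is bounded on (a,b), i.e. ‖f'‖_∞ = sup_{t ∈ (a,b)} |f'(t)| < ∞. Then for every x ∈ [a,b], |f(x) - (1/(b-a)) ∫_a^b f(u) du| ≤ (b-a) [1/4 + (x - (a+b)/2)² / (b-a)²] ‖f'‖_∞. -/
open MeasureTheory intervalIntegral

/-- **Classical Ostrowski inequality.** If `f` is continuous on `[a,b]`, differentiable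
on `(a,b)`, and its derivative is bounded on `(a,b)` by `M`, then for every `x ∈ [a,b]`,
`|f(x) - (1/(b-a)) ∫_a^b f(u) du| ≤ (b-a) [1/4 + (x-(a+b)/2)²/(b-a)²] M`. -/
theorem ostrowski_classical (a b : ℝ) (hab : a < b) (f : ℝ → ℝ)
    (hc : ContinuousOn f (Set.Icc a b))
    (hd : ∀ t ∈ Set.Ioo a b, DifferentiableAt ℝ f t)
    (M : ℝ) (hM : ∀ t ∈ Set.Ioo a b, |deriv f t| ≤ M)
    (x : ℝ) (hx : x ∈ Set.Icc a b) :
    |f x - (1 / (b - a)) * ∫ u in a..b, f u|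
      ≤ (b - a) * (1 / 4 + (x - (a + b) / 2) ^ 2 / (b - a) ^ 2) * M := by
  have hba : (0:ℝ) < b - a := by linarith
  have hM0 : 0 ≤ M := by
    have h := hM ((a+b)/2) ⟨by linarith, by linarith⟩
    exact le_trans (abs_nonneg _) h
  -- Lipschitz-type bound via MVT
  have key : ∀ u ∈ Set.Icc a b, |f x - f u| ≤ M * |x - u| := by
    intro u hu
    rcases lt_trichotomy u x with h | h | h
    · have hsub : Set.Icc u x ⊆ Set.Icc a b := Set.Icc_subset_Icc hu.1 hx.2
      have hsub' : Set.Ioo u x ⊆ Set.Ioo a b := Set.Ioo_subset_Ioo hu.1 hx.2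
      obtain ⟨c, hc', hceq⟩ := exists_hasDerivAt_eq_slope f (deriv f) h
        (hc.mono hsub) (fun t ht => (hd t (hsub' ht)).hasDerivAt)
      have : f x - f u = deriv f c * (x - u) := by
        rw [hceq]; field_simp [sub_ne_zero.2 h.ne']
      rw [this, abs_mul]
      exact mul_le_mul_of_nonneg_right (hM c (hsub' hc')) (abs_nonneg _)
    · simp [h]
    · have hsub : Set.Icc x u ⊆ Set.Icc a b := Set.Icc_subset_Icc hx.1 hu.2
      have hsub' : Set.Ioo x u ⊆ Set.Ioo a b := Set.Ioo_subset_Ioo hx.1 hu.2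
      obtain ⟨c, hc', hceq⟩ := exists_hasDerivAt_eq_slope f (deriv f) h
        (hc.mono hsub) (fun t ht => (hd t (hsub' ht)).hasDerivAt)
      have : f x - f u = deriv f c * (x - u) := by
        rw [hceq]; field_simp [sub_ne_zero.2 h.ne']; ring
      rw [this, abs_mul]
      exact mul_le_mul_of_nonneg_right (hM c (hsub' hc')) (abs_nonneg _)
  have hfi : IntervalIntegrable f volume a b :=
    (hc.mono (by rw [Set.uIcc_of_le hab.le])).intervalIntegrable
  have hstep : f x - (1 / (b - a)) * ∫ u in a..b, f u
      = (1 / (b - a)) * ∫ u in a..b, (f x - f u) := by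
    rw [intervalIntegral.integral_sub (intervalIntegrable_const) hfi,
      intervalIntegral.integral_const]
    field_simp
    ring
  -- integrability of the comparison functions
  have h1 : IntervalIntegrable (fun u => |f x - f u|) volume a b := by
    apply ContinuousOn.intervalIntegrable
    rw [Set.uIcc_of_le hab.le]
    exact ((continuousOn_const.sub hc).abs)
  have h2 : IntervalIntegrable (fun u => M * |x - u|) volume a b := by
    apply Continuous.intervalIntegrable
    continuity
  -- value of ∫ M*|x-u|
  have hanti : ∀ u ∈ Set.uIcc a b,
      HasDerivAt (fun u => M * ((u - x) * |u - x|) / 2) (M * |x - u|) u := by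
    intro u _
    have h0 : HasDerivAt (fun u : ℝ => (u - x) * |u - x|) (2 * |u - x|) u := by
      rcases lt_trichotomy u x with h | h | h
      · have heq : (fun v : ℝ => (v - x) * |v - x|) =ᶠ[nhds u] (fun v => -(v - x)^2) := by
          filter_upwards [eventually_lt_nhds h] with v hv
          rw [abs_of_neg (by linarith)]; ring
        have hD : HasDerivAt (fun v : ℝ => -(v - x)^2) (-(2 * (u - x))) u := by
          have := ((hasDerivAt_id u).sub_const x).fun_pow 2
          simpa using this.fun_neg
        have := hD.congr_of_eventuallyEq heq
        refine this.congr_deriv ?_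
        rw [abs_of_neg (by linarith)]; ring
      · subst h
        have : HasDerivAt (fun v : ℝ => (v - u) * |v - u|) 0 u := by
          rw [hasDerivAt_iff_tendsto_slope]
          have : ∀ v : ℝ, slope (fun v : ℝ => (v - u) * |v - u|) u v = |v - u| := by
            intro v
            rcases eq_or_ne v u with rfl | hv
            · rw [slope_same]; simp
            · rw [slope_def_field]
              field_simp [sub_ne_zero.2 hv]
              simp
          have habs : Filter.Tendsto (fun v : ℝ => |v - u|)
              (nhdsWithin u {u}ᶜ) (nhds 0) := by
            have h2 : Filter.Tendsto (fun v : ℝ => |v - u|) (nhds u) (nhds |u - u|) :=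
              (continuous_abs.comp (continuous_id.sub continuous_const)).tendsto u
            simpa using h2.mono_left nhdsWithin_le_nhds
          exact habs.congr fun v => (this v).symm
        simpa using this
      · have heq : (fun v : ℝ => (v - x) * |v - x|) =ᶠ[nhds u] (fun v => (v - x)^2) := by
          filter_upwards [eventually_gt_nhds h] with v hv
          rw [abs_of_pos (by linarith)]; ring
        have hD : HasDerivAt (fun v : ℝ => (v - x)^2) (2 * (u - x)) u := by
          have := ((hasDerivAt_id u).sub_const x).fun_pow 2
          simpa using this
        have := hD.congr_of_eventuallyEq heq
        refine this.congr_deriv ?_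
        rw [abs_of_pos (by linarith)]
    have := (h0.const_mul M).div_const 2
    refine this.congr_deriv ?_
    rw [abs_sub_comm]; ring
  have hval : (∫ u in a..b, M * |x - u|)
      = M * ((b - x) * |b - x| - (a - x) * |a - x|) / 2 := by
    rw [intervalIntegral.integral_eq_sub_of_hasDerivAt hanti h2]
    ring
  have hvv : (∫ u in a..b, M * |x - u|)
      = M * ((b - x)^2 + (x - a)^2) / 2 := by
    rw [hval, abs_of_nonneg (by linarith [hx.2] : (0:ℝ) ≤ b - x),
      abs_of_nonpos (by linarith [hx.1] : a - x ≤ 0)]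
    ring
  calc |f x - (1 / (b - a)) * ∫ u in a..b, f u|
      = (1 / (b - a)) * |∫ u in a..b, (f x - f u)| := by
        rw [hstep, abs_mul, abs_of_pos (by positivity : (0:ℝ) < 1/(b-a))]
    _ ≤ (1 / (b - a)) * ∫ u in a..b, |f x - f u| := by
        gcongr
        exact intervalIntegral.abs_integral_le_integral_abs hab.le
    _ ≤ (1 / (b - a)) * ∫ u in a..b, M * |x - u| := by
        gcongr
        exact intervalIntegral.integral_mono_on hab.le h1 h2 fun u hu => key u hu
    _ = (1 / (b - a)) * (M * ((b - x)^2 + (x - a)^2) / 2) := by rw [hvv]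
    _ = (b - a) * (1 / 4 + (x - (a + b) / 2) ^ 2 / (b - a) ^ 2) * M := by
        field_simp
        ring
end

section
/- Let n ∈ ℕ, let f be (n+1)-times continuously differentiable on [a,b], let x ∈ [a,b] be fixed, and assume f^{(k)}(x) = 0 for k = 1, ..., n. Then |f(x) - (1/(b-a)) ∫_a^b f(u) du| ≤ (‖f^{(n+1)}‖_∞ / (n+2)!) · [((x-a)^{n+2} + (b-x)^{n+2}) / (b-a)], where ‖f^{(n+1)}‖_∞ = sup_{t ∈ [a,b]} |f^{(n+1)}(t)|. -/
open MeasureTheory intervalIntegral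

lemma ftc_pow_bound {a b x u C : ℝ} {p : ℕ} (hx : x ∈ Set.Icc a b)
    (hu : u ∈ Set.Icc a b) {f g : ℝ → ℝ} (hfc : ContinuousOn f (Set.Icc a b))
    (hgc : ContinuousOn g (Set.Icc a b))
    (hderiv : ∀ t ∈ Set.Icc a b, HasDerivWithinAt f (g t) (Set.Icc a b) t)
    (hbound : ∀ t ∈ Set.Icc a b, |g t| ≤ C * |t - x| ^ p) :
    |f u - f x| ≤ C * (|u - x| ^ (p + 1) / (p + 1)) := by
  have hsub : Set.uIcc x u ⊆ Set.Icc a b := Set.uIcc_subset_Icc hx hu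
  have hFTC : ∀ c d : ℝ, c ∈ Set.Icc a b → d ∈ Set.Icc a b → c ≤ d →
      f d - f c = ∫ t in c..d, g t := by
    intro c d hc hd hcd
    refine (intervalIntegral.integral_eq_sub_of_hasDeriv_right_of_le hcd
      (hfc.mono (Set.Icc_subset_Icc hc.1 hd.2)) (fun t ht => ?_) ?_).symm
    · have htab : t ∈ Set.Icc a b := ⟨hc.1.trans ht.1.le, ht.2.le.trans hd.2⟩
      exact ((hderiv t htab).hasDerivAt
        (Icc_mem_nhds (hc.1.trans_lt ht.1) (ht.2.trans_le hd.2))).hasDerivWithinAt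
    · exact (hgc.mono ((Set.uIcc_of_le hcd).trans_subset (Set.Icc_subset_Icc hc.1 hd.2))
        ).intervalIntegrable
  have habs : ∫ t in Set.uIoc x u, |g t| ≤ C * (|u - x| ^ (p + 1) / (p + 1)) := by
    have h1 : ∫ t in Set.uIoc x u, |g t| ≤ ∫ t in Set.uIoc x u, C * |t - x| ^ p := by
      refine setIntegral_mono_on ?_ ?_ measurableSet_uIoc fun t ht => hbound t
        (hsub (Set.Ioc_subset_Icc_self ht))
      · exact ((hgc.mono hsub).abs.integrableOn_uIcc).mono_set Set.Ioc_subset_Icc_self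
      · exact ((continuous_const.mul (((continuous_id.sub continuous_const).abs.pow
          p))).continuousOn.integrableOn_uIcc).mono_set Set.Ioc_subset_Icc_self
    have h2 : ∫ t in Set.uIoc x u, C * |t - x| ^ p = C * (|u - x| ^ (p + 1) / (p + 1)) := by
      rw [MeasureTheory.integral_const_mul, integral_pow_abs_sub_uIoc]

    exact h1.trans_eq h2
  rcases le_total x u with h | h
  · rw [hFTC x u hx hu h]
    refine le_trans ?_ habs
    simpa [Real.norm_eq_abs] using intervalIntegral.norm_integral_le_integral_norm_uIoc
      (f := g) (a := x) (b := u) (μ := volume)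
  · rw [abs_sub_comm, hFTC u x hu hx h]
    refine le_trans ?_ habs
    rw [Set.uIoc_comm]
    simpa [Real.norm_eq_abs] using intervalIntegral.norm_integral_le_integral_norm_uIoc
      (f := g) (a := u) (b := x) (μ := volume)

lemma key_taylor_bound : ∀ (m : ℕ) (f : ℝ → ℝ) (M a b : ℝ), a < b →
    ContDiffOn ℝ (m + 1 : ℕ) f (Set.Icc a b) → ∀ x ∈ Set.Icc a b,
    (∀ k : ℕ, 1 ≤ k → k ≤ m → iteratedDerivWithin k f (Set.Icc a b) x = 0) →
    (∀ t ∈ Set.Icc a b, |iteratedDerivWithin (m + 1) f (Set.Icc a b) t| ≤ M) →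
    ∀ u ∈ Set.Icc a b, |f u - f x| ≤
      M / (Nat.factorial (m + 1) : ℝ) * (|u - x| ^ (m + 1)) := by
  intro m
  induction m with
  | zero =>
    intro f M a b hab hf x hx _ hM u hu
    have uniq : UniqueDiffOn ℝ (Set.Icc a b) := uniqueDiffOn_Icc hab
    have hdiff : DifferentiableOn ℝ f (Set.Icc a b) := hf.differentiableOn (by norm_num)
    have hb : ∀ t ∈ Set.Icc a b, |derivWithin f (Set.Icc a b) t| ≤ M * |t - x| ^ 0 := by
      intro t ht
      have := hM t ht
      rw [iteratedDerivWithin_one] at this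
      simpa using this
    have := ftc_pow_bound hx hu hf.continuousOn
      (hf.continuousOn_derivWithin uniq (by norm_num))
      (fun t ht => (hdiff t ht).hasDerivWithinAt) hb
    simpa [Nat.factorial] using this
  | succ m ih =>
    intro f M a b hab hf x hx hder hM u hu
    have uniq : UniqueDiffOn ℝ (Set.Icc a b) := uniqueDiffOn_Icc hab
    set g := derivWithin f (Set.Icc a b) with hg
    have hgcd : ContDiffOn ℝ (m + 1 : ℕ) g (Set.Icc a b) := by
      apply hf.derivWithin uniq
      exact_mod_cast le_refl (m + 2)
    have hgk : ∀ (k : ℕ) (y : ℝ), y ∈ Set.Icc a b →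
        iteratedDerivWithin k g (Set.Icc a b) y
          = iteratedDerivWithin (k + 1) f (Set.Icc a b) y := by
      intro k y hy
      exact (congrFun iteratedDerivWithin_succ' y).symm
    have hgder : ∀ k : ℕ, 1 ≤ k → k ≤ m → iteratedDerivWithin k g (Set.Icc a b) x = 0 := by
      intro k h1 h2
      rw [hgk k x hx]
      exact hder (k + 1) (by omega) (by omega)
    have hgM : ∀ t ∈ Set.Icc a b, |iteratedDerivWithin (m + 1) g (Set.Icc a b) t| ≤ M := by
      intro t ht
      rw [hgk (m + 1) t ht]
      exact hM t ht
    have hgbd := ih g M a b hab hgcd x hx hgder hgM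
    have hgx : g x = 0 := by
      have h1 := hder 1 le_rfl (by omega)
      rwa [iteratedDerivWithin_one] at h1
    have hb : ∀ t ∈ Set.Icc a b, |g t| ≤
        M / (Nat.factorial (m + 1) : ℝ) * |t - x| ^ (m + 1) := by
      intro t ht
      have := hgbd t ht
      rwa [hgx, sub_zero] at this
    have hdiff : DifferentiableOn ℝ f (Set.Icc a b) := hf.differentiableOn (by
      norm_num)
    have hmain := ftc_pow_bound hx hu hf.continuousOn hgcd.continuousOn
      (fun t ht => (hdiff t ht).hasDerivWithinAt) hb
    refine hmain.trans_eq ?_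
    have hfac : (Nat.factorial (m + 1 + 1) : ℝ) = ((m : ℝ) + 2) * (Nat.factorial (m + 1) : ℝ) := by
      rw [Nat.factorial_succ]; push_cast; ring
    have hne1 : (Nat.factorial (m + 1) : ℝ) ≠ 0 := by
      exact_mod_cast (Nat.factorial_ne_zero _)
    have hne2 : ((m : ℝ) + 2) ≠ 0 := by positivity
    rw [hfac, show ((m + 1 : ℕ) : ℝ) + 1 = (m : ℝ) + 2 by push_cast; ring]
    generalize |u - x| ^ (m + 1 + 1) = X
    rw [div_mul_div_comm, div_mul_eq_mul_div, mul_comm ((Nat.factorial (m + 1) : ℝ))]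

/-- **Anastassiou's higher-order Ostrowski inequality.** If `f ∈ C^{n+1}([a,b])`,
`x ∈ [a,b]` is fixed with `f⁽ᵏ⁾(x) = 0` for `k = 1, …, n`, and `M` bounds
`|f⁽ⁿ⁺¹⁾|` on `[a,b]`, then
`|f(x) - (1/(b-a)) ∫_a^b f(u) du| ≤ (M/(n+2)!) ((x-a)^{n+2} + (b-x)^{n+2})/(b-a)`. -/
theorem ostrowski_higher_order (n : ℕ) (a b : ℝ) (hab : a < b) (f : ℝ → ℝ)
    (hf : ContDiffOn ℝ (n + 1 : ℕ) f (Set.Icc a b))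
    (x : ℝ) (hx : x ∈ Set.Icc a b)
    (hder : ∀ k : ℕ, 1 ≤ k → k ≤ n → iteratedDerivWithin k f (Set.Icc a b) x = 0)
    (M : ℝ) (hM : ∀ t ∈ Set.Icc a b, |iteratedDerivWithin (n + 1) f (Set.Icc a b) t| ≤ M) :
    |f x - (1 / (b - a)) * ∫ u in a..b, f u|
      ≤ M / (Nat.factorial (n + 2)) * (((x - a) ^ (n + 2) + (b - x) ^ (n + 2)) / (b - a)) := by
  have hba : (0 : ℝ) < b - a := sub_pos.2 hab
  have hne : b - a ≠ 0 := hba.ne'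
  have hkey := key_taylor_bound n f M a b hab hf x hx hder hM
  have hfc : ContinuousOn f (Set.Icc a b) := hf.continuousOn
  have hfi : IntervalIntegrable f volume a b := by
    apply ContinuousOn.intervalIntegrable
    rwa [Set.uIcc_of_le hab.le]
  -- rewrite the LHS
  have heq : f x - (1 / (b - a)) * ∫ u in a..b, f u
      = (1 / (b - a)) * ∫ u in a..b, (f x - f u) := by
    rw [intervalIntegral.integral_sub intervalIntegrable_const hfi,
      intervalIntegral.integral_const, smul_eq_mul]
    field_simp
  set F : ℝ := (Nat.factorial (n + 1) : ℝ) with hF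
  have hFne : F ≠ 0 := by rw [hF]; exact_mod_cast (Nat.factorial_ne_zero (n + 1))
  -- bound the integral
  have hintbound : |∫ u in a..b, (f x - f u)|
      ≤ ∫ u in Set.Ioc a b, (M / F * |u - x| ^ (n + 1)) := by
    have h1 : |∫ u in a..b, (f x - f u)| ≤ ∫ u in Set.Ioc a b, |f x - f u| := by
      have := intervalIntegral.norm_integral_le_integral_norm_uIoc
        (f := fun u => f x - f u) (a := a) (b := b) (μ := volume)
      rw [Set.uIoc_of_le hab.le] at this
      simpa [Real.norm_eq_abs] using this
    refine h1.trans (setIntegral_mono_on ?_ ?_ measurableSet_Ioc ?_)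
    · exact ((continuousOn_const.sub hfc).abs.integrableOn_Icc).mono_set
        Set.Ioc_subset_Icc_self
    · exact ((continuous_const.mul (((continuous_id.sub continuous_const).abs.pow
        (n + 1)))).continuousOn.integrableOn_Icc).mono_set Set.Ioc_subset_Icc_self
    · intro t ht
      rw [abs_sub_comm]
      exact hkey t (Set.Ioc_subset_Icc_self ht)
  -- compute the integral of the bound
  have hJ1 : ∫ u in a..x, |u - x| ^ (n + 1) = (x - a) ^ (n + 2) / ((n : ℝ) + 2) := by
    rw [intervalIntegral.integral_of_le hx.1,
      show Set.Ioc a x = Set.uIoc x a from (Set.uIoc_of_ge hx.1).symm,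
      integral_pow_abs_sub_uIoc, abs_sub_comm a x, abs_of_nonneg (sub_nonneg.2 hx.1)]
    push_cast
    ring
  have hJ2 : ∫ u in x..b, |u - x| ^ (n + 1) = (b - x) ^ (n + 2) / ((n : ℝ) + 2) := by
    rw [intervalIntegral.integral_of_le hx.2,
      show Set.Ioc x b = Set.uIoc x b from (Set.uIoc_of_le hx.2).symm,
      integral_pow_abs_sub_uIoc, abs_of_nonneg (sub_nonneg.2 hx.2)]
    push_cast
    ring
  have hint1 : IntervalIntegrable (fun u => |u - x| ^ (n + 1)) volume a x :=
    (((continuous_id.sub continuous_const).abs.pow (n + 1))).intervalIntegrable _ _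
  have hint2 : IntervalIntegrable (fun u => |u - x| ^ (n + 1)) volume x b :=
    (((continuous_id.sub continuous_const).abs.pow (n + 1))).intervalIntegrable _ _
  have hval : ∫ u in Set.Ioc a b, (M / F * |u - x| ^ (n + 1))
      = M / F * (((x - a) ^ (n + 2) + (b - x) ^ (n + 2)) / ((n : ℝ) + 2)) := by
    rw [MeasureTheory.integral_const_mul, ← intervalIntegral.integral_of_le hab.le,
      ← intervalIntegral.integral_add_adjacent_intervals hint1 hint2, hJ1, hJ2]
    ring
  -- put it together
  rw [heq, abs_mul, abs_of_pos (by positivity : (0:ℝ) < 1 / (b - a))]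
  have hchain : (1 / (b - a)) * |∫ u in a..b, (f x - f u)|
      ≤ (1 / (b - a)) * (M / F * (((x - a) ^ (n + 2) + (b - x) ^ (n + 2)) / ((n : ℝ) + 2))) := by
    apply mul_le_mul_of_nonneg_left _ (by positivity)
    rw [← hval]
    exact hintbound
  refine hchain.trans_eq ?_
  have hfac : (Nat.factorial (n + 2) : ℝ) = ((n : ℝ) + 2) * F := by
    rw [hF, Nat.factorial_succ]
    push_cast
    ring
  rw [hfac]
  generalize (x - a) ^ (n + 2) + (b - x) ^ (n + 2) = S
  rw [div_mul_eq_div_div]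
  ring
end

section
/- Let α > 0, m = ⌈α⌉, and suppose f : [a,b] → ℝ is such that f^{(m-1)} is absolutely continuous on [a,b]. Then for every x ∈ [a,b], f(x) = Σ_{k=0}^{m-1} (f^{(k)}(b)/k!) (x-b)^k + (1/Γ(α)) ∫_x^b (t-x)^{α-1} D_{b-}^α f(t) dt. -/
open MeasureTheory intervalIntegral

/-- `f ∈ AC^m([a,b])`: `f` is `(m-1)`-times continuously differentiable on `[a,b]` and
`f^{(m-1)}` is absolutely continuous on `[a,b]`, i.e. `f^{(m-1)}` is recovered by
integrating its (a.e.) derivative `f^{(m)}`, which is integrable on `[a,b]`. -/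
def IsACDeriv (m : ℕ) (a b : ℝ) (f : ℝ → ℝ) : Prop :=
  ContDiffOn ℝ (m - 1 : ℕ) f (Set.Icc a b) ∧
  IntervalIntegrable (iteratedDerivWithin m f (Set.Icc a b)) MeasureTheory.volume a b ∧
  ∀ x ∈ Set.Icc a b,
    iteratedDerivWithin (m - 1) f (Set.Icc a b) x
      = iteratedDerivWithin (m - 1) f (Set.Icc a b) a
        + ∫ t in a..x, iteratedDerivWithin m f (Set.Icc a b) t

/-- The right Caputo fractional derivative `D_{b-}^α f` of order `α > 0` of `f` on `[a,b]`:
with `m = ⌈α⌉`, it is `((-1)^m / Γ(m-α)) ∫_x^b (t-x)^{m-α-1} f^{(m)}(t) dt` when `α ∉ ℕ`,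
and `(-1)^m f^{(m)}(x)` when `α = m ∈ ℕ`. -/
noncomputable def rightCaputoDeriv (α a b : ℝ) (f : ℝ → ℝ) (x : ℝ) : ℝ :=
  if α = (⌈α⌉₊ : ℝ) then
    (-1 : ℝ) ^ (⌈α⌉₊ : ℕ) * iteratedDerivWithin ⌈α⌉₊ f (Set.Icc a b) x
  else
    ((-1 : ℝ) ^ (⌈α⌉₊ : ℕ) / Real.Gamma ((⌈α⌉₊ : ℝ) - α)) *
      ∫ t in x..b, (t - x) ^ ((⌈α⌉₊ : ℝ) - α - 1) * iteratedDerivWithin ⌈α⌉₊ f (Set.Icc a b) t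


lemma betaK_integrable {p q : ℝ} (hp : 0 < p) (hq : 0 < q) (x s : ℝ) (hxs : x ≤ s) :
    IntervalIntegrable (fun t => (t - x) ^ (p - 1) * (s - t) ^ (q - 1)) volume x s := by
  rcases eq_or_lt_of_le hxs with h | h
  · subst h
    rw [intervalIntegrable_iff_integrableOn_Ioc_of_le le_rfl]
    simp
  set c := (x + s) / 2 with hc
  have hxc : x < c := by rw [hc]; linarith
  have hcs : c < s := by rw [hc]; linarith
  have h1 : IntervalIntegrable (fun t => (t - x) ^ (p - 1) * (s - t) ^ (q - 1)) volume x c := by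
    have hi : IntervalIntegrable (fun t : ℝ => (t - x) ^ (p - 1)) volume x c := by
      have := (intervalIntegral.intervalIntegrable_rpow' (a := 0) (b := c - x)
        (by linarith : (-1:ℝ) < p - 1)).comp_sub_right x
      simpa using this
    refine hi.mul_continuousOn ?_
    refine ContinuousOn.rpow_const (by fun_prop) fun t ht => Or.inl ?_
    rw [Set.uIcc_of_le hxc.le] at ht
    have h2 : t < s := lt_of_le_of_lt ht.2 hcs
    have : (0:ℝ) < s - t := by linarith
    positivity
  have h2 : IntervalIntegrable (fun t => (t - x) ^ (p - 1) * (s - t) ^ (q - 1)) volume c s := by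
    have hi : IntervalIntegrable (fun t : ℝ => (s - t) ^ (q - 1)) volume c s := by
      have := (intervalIntegral.intervalIntegrable_rpow' (a := 0) (b := s - c)
        (by linarith : (-1:ℝ) < q - 1)).comp_sub_left s
      simpa using this.symm
    refine hi.continuousOn_mul ?_
    refine ContinuousOn.rpow_const (by fun_prop) fun t ht => Or.inl ?_
    rw [Set.uIcc_of_le hcs.le] at ht
    have h2 : x < t := lt_of_lt_of_le hxc ht.1
    have : (0:ℝ) < t - x := by linarith
    positivity
  exact h1.trans h2


lemma beta01_eval {p q : ℝ} (hp : 0 < p) (hq : 0 < q) :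
    ∫ u in (0:ℝ)..1, u ^ (p - 1) * (1 - u) ^ (q - 1)
      = Real.Gamma p * Real.Gamma q / Real.Gamma (p + q) := by
  have hC := Complex.Gamma_mul_Gamma_eq_betaIntegral (s := (p:ℂ)) (t := (q:ℂ))
    (by simpa using hp) (by simpa using hq)
  have hB : Complex.betaIntegral (p:ℂ) (q:ℂ)
      = ((∫ u in (0:ℝ)..1, u ^ (p - 1) * (1 - u) ^ (q - 1) : ℝ) : ℂ) := by
    rw [Complex.betaIntegral, ← intervalIntegral.integral_ofReal]
    refine intervalIntegral.integral_congr fun u hu => ?_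
    rw [Set.uIcc_of_le (by norm_num : (0:ℝ) ≤ 1)] at hu
    rw [show ((p:ℂ) - 1) = ((p - 1 : ℝ) : ℂ) by push_cast; ring,
      show ((q:ℂ) - 1) = ((q - 1 : ℝ) : ℂ) by push_cast; ring,
      show (1 - (u:ℂ)) = ((1 - u : ℝ) : ℂ) by push_cast; ring,
      ← Complex.ofReal_cpow hu.1, ← Complex.ofReal_cpow (by linarith [hu.2])]
    push_cast
    ring
  rw [hB, show ((p:ℂ) + (q:ℂ)) = ((p + q : ℝ) : ℂ) by push_cast; ring,
    Complex.Gamma_ofReal, Complex.Gamma_ofReal, Complex.Gamma_ofReal] at hC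
  have hG : Real.Gamma (p + q) ≠ 0 := (Real.Gamma_pos_of_pos (by linarith)).ne'
  have h2 : Real.Gamma p * Real.Gamma q
      = Real.Gamma (p + q) * ∫ u in (0:ℝ)..1, u ^ (p - 1) * (1 - u) ^ (q - 1) := by
    exact_mod_cast hC
  field_simp
  linarith [h2]

lemma betaK_eval {p q : ℝ} (hp : 0 < p) (hq : 0 < q) {x s : ℝ} (hxs : x < s) :
    ∫ t in x..s, (t - x) ^ (p - 1) * (s - t) ^ (q - 1)
      = (s - x) ^ (p + q - 1) * (Real.Gamma p * Real.Gamma q / Real.Gamma (p + q)) := by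
  set c := s - x with hcdef
  have hc0 : 0 < c := by simp [hcdef]; linarith
  have hsub := intervalIntegral.integral_comp_mul_add
    (a := (0:ℝ)) (b := 1) (fun t => (t - x) ^ (p - 1) * (s - t) ^ (q - 1)) hc0.ne' x
  simp only [mul_zero, zero_add, mul_one] at hsub
  have hends : c + x = s := by rw [hcdef]; ring
  rw [hends] at hsub
  have h1 : (∫ u in (0:ℝ)..1, (c * u + x - x) ^ (p - 1) * (s - (c * u + x)) ^ (q - 1))
      = (c ^ (p - 1) * c ^ (q - 1)) * ∫ u in (0:ℝ)..1, u ^ (p - 1) * (1 - u) ^ (q - 1) := by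
    rw [← intervalIntegral.integral_const_mul]
    refine intervalIntegral.integral_congr fun u hu => ?_
    rw [Set.uIcc_of_le (by norm_num : (0:ℝ) ≤ 1)] at hu
    have e1 : c * u + x - x = c * u := by ring
    have e2 : s - (c * u + x) = c * (1 - u) := by rw [hcdef]; ring
    rw [e1, e2, Real.mul_rpow hc0.le hu.1, Real.mul_rpow hc0.le (by linarith [hu.2])]
    ring
  rw [h1] at hsub
  -- hsub : above = c⁻¹ • ∫ t in x..s, ...
  have : (∫ t in x..s, (t - x) ^ (p - 1) * (s - t) ^ (q - 1))
      = c * ((c ^ (p - 1) * c ^ (q - 1)) * ∫ u in (0:ℝ)..1, u ^ (p - 1) * (1 - u) ^ (q - 1)) := by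
    rw [hsub, smul_eq_mul, ← mul_assoc, mul_inv_cancel₀ hc0.ne', one_mul]
  rw [this, beta01_eval hp hq, ← mul_assoc]
  congr 1
  rw [← Real.rpow_add hc0, mul_comm, ← Real.rpow_add_one hc0.ne']
  ring_nf

lemma swap_kernel {p q : ℝ} (hp : 0 < p) (hq : 0 < q) (hpq : 1 ≤ p + q)
    {x b : ℝ} (hxb : x ≤ b) {g : ℝ → ℝ} (hg : IntervalIntegrable g volume x b) :
    (∫ t in x..b, (t - x) ^ (p - 1) * ∫ s in t..b, (s - t) ^ (q - 1) * g s)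
      = (Real.Gamma p * Real.Gamma q / Real.Gamma (p + q)) *
          ∫ s in x..b, (s - x) ^ (p + q - 1) * g s := by
  set B := Real.Gamma p * Real.Gamma q / Real.Gamma (p + q) with hB
  set μ := volume.restrict (Set.Ioc x b) with hμ
  set K : ℝ → ℝ → ℝ := fun t s => (t - x) ^ (p - 1) * (s - t) ^ (q - 1) with hK
  set F : ℝ × ℝ → ℝ :=
    ({z : ℝ × ℝ | z.1 < z.2}).indicator (fun z => K z.1 z.2 * g z.2) with hF
  have hgio : IntegrableOn g (Set.Ioc x b) volume :=
    (intervalIntegrable_iff_integrableOn_Ioc_of_le hxb).mp hg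
  have hgmeas : AEStronglyMeasurable g μ := hgio.aestronglyMeasurable
  have hFmeas : AEStronglyMeasurable F (μ.prod μ) := by
    refine AEStronglyMeasurable.indicator ?_ (measurableSet_lt measurable_fst measurable_snd)
    refine AEStronglyMeasurable.mul ?_ ?_
    · exact (((measurable_fst.sub measurable_const).pow measurable_const).mul
        ((measurable_snd.sub measurable_fst).pow measurable_const)).aestronglyMeasurable
    · exact (aestronglyMeasurable_iff_aemeasurable.mpr
        ((aestronglyMeasurable_iff_aemeasurable.mp hgmeas).comp_snd))
  have hsec : ∀ s, (fun t => F (t, s))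
      = (Set.Iio s).indicator (fun t => K t s * g s) := by
    intro s
    ext t
    by_cases h : t < s
    · simp [hF, Set.indicator_of_mem, h, Set.mem_Iio.mpr h]
    · simp [hF, Set.indicator_of_notMem, h]
  have hsec2 : ∀ t, (fun s => F (t, s))
      = (Set.Ioi t).indicator (fun s => K t s * g s) := by
    intro t
    ext s
    by_cases h : t < s
    · simp [hF, Set.indicator_of_mem, h, Set.mem_Ioi.mpr h]
    · simp [hF, Set.indicator_of_notMem, h]
  have hKint : ∀ s ∈ Set.Ioc x b, IntegrableOn (fun t => K t s) (Set.Ioo x s) volume := by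
    intro s hs
    exact ((intervalIntegrable_iff_integrableOn_Ioc_of_le hs.1.le).mp
      (betaK_integrable hp hq x s hs.1.le)).mono_set Set.Ioo_subset_Ioc_self
  have hinter : ∀ s ∈ Set.Ioc x b, Set.Iio s ∩ Set.Ioc x b = Set.Ioo x s := by
    intro s hs
    ext t
    simp only [Set.mem_inter_iff, Set.mem_Iio, Set.mem_Ioc, Set.mem_Ioo]
    constructor
    · rintro ⟨h1, h2, _⟩; exact ⟨h2, h1⟩
    · rintro ⟨h1, h2⟩; exact ⟨h2, h1, le_trans h2.le hs.2⟩
  have hinter2 : ∀ t ∈ Set.Ioc x b, Set.Ioi t ∩ Set.Ioc x b = Set.Ioc t b := by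
    intro t ht
    ext s
    simp only [Set.mem_inter_iff, Set.mem_Ioi, Set.mem_Ioc]
    constructor
    · rintro ⟨h1, _, h3⟩; exact ⟨h1, h3⟩
    · rintro ⟨h1, h2⟩; exact ⟨h1, lt_trans ht.1 h1, h2⟩
  have hKnonneg : ∀ s, ∀ t ∈ Set.Ioo x s, 0 ≤ K t s := by
    intro s t ht
    exact mul_nonneg (Real.rpow_nonneg (by linarith [ht.1]) _)
      (Real.rpow_nonneg (by linarith [ht.2]) _)
  have hcond1 : ∀ᵐ s ∂μ, Integrable (fun t => F (t, s)) μ := by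
    rw [hμ]
    filter_upwards [ae_restrict_mem measurableSet_Ioc] with s hs
    rw [hsec s, integrable_indicator_iff measurableSet_Iio]
    rw [IntegrableOn, Measure.restrict_restrict measurableSet_Iio, hinter s hs]
    exact (hKint s hs).mul_const (g s)
  have hnorm : ∀ s ∈ Set.Ioc x b,
      (∫ t, ‖F (t, s)‖ ∂μ) = (s - x) ^ (p + q - 1) * B * ‖g s‖ := by
    intro s hs
    have e1 : (fun t => ‖F (t, s)‖) = (Set.Iio s).indicator (fun t => ‖K t s * g s‖) := by
      funext t
      rw [show F (t, s) = (Set.Iio s).indicator (fun t => K t s * g s) t from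
        congrFun (hsec s) t]
      exact norm_indicator_eq_indicator_norm _ t
    rw [e1, MeasureTheory.integral_indicator measurableSet_Iio, hμ,
      Measure.restrict_restrict measurableSet_Iio, hinter s hs]
    have e2 : ∫ t in Set.Ioo x s, ‖K t s * g s‖
        = ∫ t in Set.Ioo x s, K t s * ‖g s‖ := by
      refine setIntegral_congr_fun measurableSet_Ioo fun t ht => ?_
      rw [norm_mul, Real.norm_of_nonneg (hKnonneg s t ht)]
    rw [e2, MeasureTheory.integral_mul_const]
    congr 1
    rw [← integral_Ioc_eq_integral_Ioo, ← intervalIntegral.integral_of_le hs.1.le,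
      betaK_eval hp hq hs.1]
  have hcontB : Continuous fun s : ℝ => (s - x) ^ (p + q - 1) := by
    rcases eq_or_lt_of_le hpq with h1 | h1
    · have : (p + q - 1) = 0 := by linarith
      simp only [this, Real.rpow_zero]
      exact continuous_const
    · have : ∀ s : ℝ, ContinuousAt (fun s : ℝ => (s - x) ^ (p + q - 1)) s := fun s =>
        (Real.continuousAt_rpow_const _ _ (Or.inr (by linarith))).comp
          ((continuous_id.sub continuous_const).continuousAt)
      exact continuous_iff_continuousAt.mpr this
  have hcond2 : Integrable (fun s => ∫ t, ‖F (t, s)‖ ∂μ) μ := by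
    have hbase : IntervalIntegrable (fun s => (s - x) ^ (p + q - 1) * B * ‖g s‖)
        volume x b := by
      have := (hg.norm.continuousOn_mul
        (((hcontB.mul continuous_const).continuousOn) : ContinuousOn
          (fun s : ℝ => (s - x) ^ (p + q - 1) * B) (Set.uIcc x b)))
      simpa [mul_comm, mul_assoc, mul_left_comm] using this
    have hbase2 : Integrable (fun s => (s - x) ^ (p + q - 1) * B * ‖g s‖) μ :=
      (intervalIntegrable_iff_integrableOn_Ioc_of_le hxb).mp hbase
    refine hbase2.congr ?_
    rw [hμ]
    filter_upwards [ae_restrict_mem measurableSet_Ioc] with s hs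
    exact (hnorm s hs).symm
  have hFint : Integrable F (μ.prod μ) :=
    (integrable_prod_iff' hFmeas).mpr ⟨hcond1, hcond2⟩
  have hswap := MeasureTheory.integral_integral_swap (f := fun t s => F (t, s))
    (μ := μ) (ν := μ) hFint
  -- identify LHS
  have hLHS : (∫ t in x..b, (t - x) ^ (p - 1) * ∫ s in t..b, (s - t) ^ (q - 1) * g s)
      = ∫ t, ∫ s, F (t, s) ∂μ ∂μ := by
    rw [intervalIntegral.integral_of_le hxb]
    refine setIntegral_congr_fun measurableSet_Ioc fun t ht => ?_
    rw [hsec2 t, MeasureTheory.integral_indicator measurableSet_Ioi, hμ,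
      Measure.restrict_restrict measurableSet_Ioi, hinter2 t ht,
      ← intervalIntegral.integral_of_le ht.2]
    rw [← intervalIntegral.integral_const_mul]
    refine intervalIntegral.integral_congr fun s _ => ?_
    simp only [hK]
    ring
  -- identify RHS
  have hRHS : (∫ s, ∫ t, F (t, s) ∂μ ∂μ)
      = B * ∫ s in x..b, (s - x) ^ (p + q - 1) * g s := by
    rw [intervalIntegral.integral_of_le hxb, ← MeasureTheory.integral_const_mul]
    rw [hμ]
    refine (setIntegral_congr_fun measurableSet_Ioc fun s hs => ?_)
    rw [hsec s, MeasureTheory.integral_indicator measurableSet_Iio,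
      Measure.restrict_restrict measurableSet_Iio, hinter s hs,
      MeasureTheory.integral_mul_const, ← integral_Ioc_eq_integral_Ioo,
      ← intervalIntegral.integral_of_le hs.1.le, betaK_eval hp hq hs.1]
    ring
  rw [hLHS, hswap, hRHS]

lemma taylor_ac (j : ℕ) (a b : ℝ) (hab : a < b) (f : ℝ → ℝ)
    (hf : IsACDeriv (j + 1) a b f) (x : ℝ) (hx : x ∈ Set.Icc a b) :
    f x = (∑ k ∈ Finset.range (j + 1),
        iteratedDerivWithin k f (Set.Icc a b) b / (Nat.factorial k) * (x - b) ^ k)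
      + ∫ s in x..b, ((-1 : ℝ) ^ (j + 1) * (s - x) ^ j / (Nat.factorial j)) *
          iteratedDerivWithin (j + 1) f (Set.Icc a b) s := by
  obtain ⟨h1, h2, h3⟩ := hf
  simp only [Nat.add_sub_cancel] at h1 h3
  set I := Set.Icc a b with hI
  set F : ℕ → ℝ → ℝ := fun k => iteratedDerivWithin k f I with hFdef
  have hud : UniqueDiffOn ℝ I := uniqueDiffOn_Icc hab
  have h2' : IntervalIntegrable (F (j + 1)) volume a b := h2
  have h3' : ∀ y ∈ I, F j y = F j a + ∫ t in a..y, F (j + 1) t := h3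
  have hxb : x ≤ b := hx.2
  have hIsub : Set.Icc x b ⊆ I := Set.Icc_subset_Icc hx.1 le_rfl
  have hbI : b ∈ I := ⟨hab.le, le_rfl⟩
  have hcont : ∀ k, k ≤ j → ContinuousOn (F k) I := fun k hk =>
    h1.continuousOn_iteratedDerivWithin (by exact_mod_cast hk) hud
  have hint : ∀ k, k ≤ j + 1 → ∀ t ∈ I, IntervalIntegrable (F k) volume t b := by
    intro k hk t ht
    rcases Nat.lt_or_ge k (j + 1) with h | h
    · refine ContinuousOn.intervalIntegrable ?_
      rw [Set.uIcc_of_le ht.2]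
      exact (hcont k (by omega)).mono (Set.Icc_subset_Icc ht.1 le_rfl)
    · have : k = j + 1 := by omega
      subst this
      refine h2.mono_set ?_
      rw [Set.uIcc_of_le ht.2, Set.uIcc_of_le hab.le]
      exact Set.Icc_subset_Icc ht.1 le_rfl
  have hFTC : ∀ k, k + 1 ≤ j + 1 → ∀ t ∈ I,
      F k b - F k t = ∫ s in t..b, F (k + 1) s := by
    intro k hk t ht
    rcases Nat.lt_or_ge (k + 1) (j + 1) with h | h
    · -- C^1 case
      have hdiff : DifferentiableOn ℝ (F k) I :=
        h1.differentiableOn_iteratedDerivWithin (by exact_mod_cast (by omega : k < j)) hud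
      have hderiv : ∀ s ∈ Set.Ioo t b, HasDerivWithinAt (F k) (F (k + 1) s) (Set.Ioi s) s := by
        intro s hs
        have hsI : s ∈ I := ⟨le_trans ht.1 hs.1.le, hs.2.le⟩
        have hsIoo : s ∈ Set.Ioo a b := ⟨lt_of_le_of_lt ht.1 hs.1, hs.2⟩
        have hd := (hdiff s hsI).hasDerivWithinAt
        rw [← iteratedDerivWithin_succ] at hd
        exact (hd.hasDerivAt (Icc_mem_nhds hsIoo.1 hsIoo.2)).hasDerivWithinAt
      have := intervalIntegral.integral_eq_sub_of_hasDeriv_right_of_le ht.2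
        ((hcont k (by omega)).mono (Set.Icc_subset_Icc ht.1 le_rfl)) hderiv
        (hint (k + 1) (by omega) t ht)
      linarith [this]
    · have hkj : j = k := by omega
      subst hkj
      have hb := h3' b hbI
      have ht' := h3' t ht
      have heq : F j b - F j t = (∫ s in a..b, F (j + 1) s) - ∫ s in a..t, F (j + 1) s := by
        rw [hb, ht']; ring
      rw [heq, intervalIntegral.integral_interval_sub_left h2'
        (h2'.mono_set (by rw [Set.uIcc_of_le ht.1, Set.uIcc_of_le hab.le]
                          exact Set.Icc_subset_Icc le_rfl ht.2))]
  have main : ∀ i : ℕ, i ≤ j →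
      f x = (∑ k ∈ Finset.range (i + 1), F k b / (Nat.factorial k) * (x - b) ^ k)
        + ∫ s in x..b, ((-1 : ℝ) ^ (i + 1) * (s - x) ^ i / (Nat.factorial i)) * F (i + 1) s := by
    intro i
    induction i with
    | zero =>
      intro _
      have h0 := hFTC 0 (by omega) x hx
      have hf0 : F 0 x = f x := congrFun iteratedDerivWithin_zero x
      have hneg : (∫ s in x..b, ((-1:ℝ) ^ (0 + 1) * (s - x) ^ 0 / (Nat.factorial 0)) * F (0 + 1) s)
          = - ∫ s in x..b, F 1 s := by
        rw [← intervalIntegral.integral_neg]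
        refine intervalIntegral.integral_congr fun s _ => by norm_num
      rw [hneg]
      norm_num [Finset.sum_range_one]
      rw [hf0] at h0
      linarith [h0]
    | succ i ih =>
      intro hij
      have hIH := ih (by omega)
      set c : ℝ := (-1 : ℝ) ^ (i + 1) / (Nat.factorial i) with hc
      have hpoint : ∀ s ∈ Set.Icc x b,
          ((-1 : ℝ) ^ (i + 1) * (s - x) ^ i / (Nat.factorial i)) * F (i + 1) s
            = (c * F (i + 1) b) * (s - x) ^ i
              - c * ((s - x) ^ i * ∫ u in s..b, F (i + 2) u) := by
        intro s hs
        have := hFTC (i + 1) (by omega) s (hIsub hs)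
        have hrepr : F (i + 1) s = F (i + 1) b - ∫ u in s..b, F (i + 2) u := by linarith
        rw [hrepr, hc]; ring
      have hprimcont : ContinuousOn (fun s => ∫ u in s..b, F (i + 2) u) (Set.uIcc x b) := by
        refine intervalIntegral.continuousOn_primitive_interval_left ?_
        rw [Set.uIcc_of_le hxb, integrableOn_Icc_iff_integrableOn_Ioc]
        exact (intervalIntegrable_iff_integrableOn_Ioc_of_le hxb).mp
          (hint (i + 2) (by omega) x hx)
      have hA : IntervalIntegrable (fun s => (c * F (i + 1) b) * (s - x) ^ i) volume x b :=
        (Continuous.intervalIntegrable (by fun_prop) x b)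
      have hB : IntervalIntegrable
          (fun s => c * ((s - x) ^ i * ∫ u in s..b, F (i + 2) u)) volume x b := by
        refine ContinuousOn.intervalIntegrable ?_
        exact (continuousOn_const.mul ((by fun_prop : ContinuousOn (fun s : ℝ => (s - x) ^ i)
          (Set.uIcc x b)).mul hprimcont))
      have hsplit : (∫ s in x..b, ((-1 : ℝ) ^ (i + 1) * (s - x) ^ i / (Nat.factorial i))
            * F (i + 1) s)
          = (∫ s in x..b, (c * F (i + 1) b) * (s - x) ^ i)
            - ∫ s in x..b, c * ((s - x) ^ i * ∫ u in s..b, F (i + 2) u) := by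
        rw [← intervalIntegral.integral_sub hA hB]
        refine intervalIntegral.integral_congr fun s hs => ?_
        rw [Set.uIcc_of_le hxb] at hs
        exact hpoint s hs
      have hpow : (∫ s in x..b, (s - x) ^ i) = (b - x) ^ (i + 1) / (i + 1) := by
        rw [show (fun s : ℝ => (s - x) ^ i) = fun s : ℝ => (s - x) ^ i from rfl]
        rw [intervalIntegral.integral_comp_sub_right (fun u : ℝ => u ^ i) x]
        simp [integral_pow]
      have hIA : (∫ s in x..b, (c * F (i + 1) b) * (s - x) ^ i)
          = (c * F (i + 1) b) * ((b - x) ^ (i + 1) / (i + 1)) := by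
        rw [intervalIntegral.integral_const_mul, hpow]
      -- the swap computation
      have hg2 : IntervalIntegrable (F (i + 2)) volume x b := hint (i + 2) (by omega) x hx
      have hsw := swap_kernel (p := (i + 1 : ℝ)) (q := 1) (by positivity) one_pos
        (by push_cast; linarith) hxb hg2
      have hcast1 : ((i + 1 : ℝ)) - 1 = ((i : ℕ) : ℝ) := by push_cast; ring
      have hlhseq : (∫ t in x..b, (t - x) ^ ((i + 1 : ℝ) - 1)
            * ∫ s in t..b, (s - t) ^ ((1 : ℝ) - 1) * F (i + 2) s)
          = ∫ t in x..b, (t - x) ^ i * ∫ s in t..b, F (i + 2) s := by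
        refine intervalIntegral.integral_congr fun t ht => ?_
        rw [hcast1, Real.rpow_natCast]
        congr 1
        refine intervalIntegral.integral_congr fun s hs => ?_
        norm_num
      have hrhseq : (∫ s in x..b, (s - x) ^ ((i + 1 : ℝ) + 1 - 1) * F (i + 2) s)
          = ∫ s in x..b, (s - x) ^ (i + 1) * F (i + 2) s := by
        refine intervalIntegral.integral_congr fun s hs => ?_
        rw [show ((i + 1 : ℝ)) + 1 - 1 = (((i + 1 : ℕ)) : ℝ) by push_cast; ring,
          Real.rpow_natCast]
      rw [hlhseq, hrhseq] at hsw
      have hgamma : Real.Gamma ((i : ℕ) + 1 : ℝ) * Real.Gamma 1 / Real.Gamma ((i + 1 : ℝ) + 1)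
          = (Nat.factorial i : ℝ) / (Nat.factorial (i + 1) : ℝ) := by
        rw [Real.Gamma_one,
          show ((i + 1 : ℝ) + 1) = (((i + 1 : ℕ) : ℝ) + 1) by push_cast; ring,
          Real.Gamma_nat_eq_factorial, Real.Gamma_nat_eq_factorial]
        ring
      rw [hgamma] at hsw
      -- compute ∫ B
      have hIB : (∫ s in x..b, c * ((s - x) ^ i * ∫ u in s..b, F (i + 2) u))
          = c * (((Nat.factorial i : ℝ) / (Nat.factorial (i + 1) : ℝ))
              * ∫ s in x..b, (s - x) ^ (i + 1) * F (i + 2) s) := by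
        rw [intervalIntegral.integral_const_mul, hsw]
      -- the new remainder
      have hrem : (∫ s in x..b, ((-1 : ℝ) ^ (i + 1 + 1) * (s - x) ^ (i + 1)
            / (Nat.factorial (i + 1))) * F (i + 1 + 1) s)
          = ((-1 : ℝ) ^ (i + 2) / (Nat.factorial (i + 1)))
              * ∫ s in x..b, (s - x) ^ (i + 1) * F (i + 2) s := by
        rw [← intervalIntegral.integral_const_mul]
        refine intervalIntegral.integral_congr fun s hs => ?_
        show _ = ((-1 : ℝ) ^ (i + 2) / (Nat.factorial (i + 1))) * ((s - x) ^ (i + 1) * F (i + 2) s)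
        ring_nf
      -- assemble
      rw [Finset.sum_range_succ, hrem]
      rw [hsplit, hIA, hIB] at hIH
      rw [hIH]
      have hfacpos : (0:ℝ) < (Nat.factorial i : ℝ) := by exact_mod_cast Nat.factorial_pos i
      have hfacsucc : (Nat.factorial (i + 1) : ℝ) = ((i : ℝ) + 1) * (Nat.factorial i : ℝ) := by
        rw [Nat.factorial_succ]; push_cast; ring
      have hxb' : (x - b) ^ (i + 1) = (-1 : ℝ) ^ (i + 1) * (b - x) ^ (i + 1) := by
        rw [show x - b = -(b - x) by ring, neg_pow]
      have hsgn : (-1 : ℝ) ^ (i + 2) = -((-1 : ℝ) ^ (i + 1)) := by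
        rw [pow_succ]; ring
      rw [hc, hxb', hfacsucc, hsgn]
      field_simp
      ring
  have := main j le_rfl
  exact this

/-- **Right Caputo fractional Taylor formula with integral remainder.** -/

theorem rightCaputo_taylor (α : ℝ) (hα : 0 < α) (a b : ℝ) (hab : a < b) (f : ℝ → ℝ)
    (hf : IsACDeriv ⌈α⌉₊ a b f) (x : ℝ) (hx : x ∈ Set.Icc a b) :
    f x = (∑ k ∈ Finset.range ⌈α⌉₊,
        iteratedDerivWithin k f (Set.Icc a b) b / (Nat.factorial k) * (x - b) ^ k)
      + (1 / Real.Gamma α) * ∫ t in x..b, (t - x) ^ (α - 1) * rightCaputoDeriv α a b f t := by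
  obtain ⟨j, hj⟩ : ∃ j, ⌈α⌉₊ = j + 1 :=
    ⟨⌈α⌉₊ - 1, by have := Nat.ceil_pos.mpr hα; omega⟩
  have htay := taylor_ac j a b hab f (hj ▸ hf) x hx
  rw [← hj] at htay
  have hxb : x ≤ b := hx.2
  have hg : IntervalIntegrable (iteratedDerivWithin ⌈α⌉₊ f (Set.Icc a b)) volume x b := by
    refine hf.2.1.mono_set ?_
    rw [Set.uIcc_of_le hxb, Set.uIcc_of_le hab.le]
    exact Set.Icc_subset_Icc hx.1 le_rfl
  have hfac0 : ((Nat.factorial j : ℕ) : ℝ) ≠ 0 := by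
    exact_mod_cast (Nat.factorial_pos j).ne'
  rw [htay]
  congr 1
  by_cases hint : α = (⌈α⌉₊ : ℝ)
  · -- integer order
    have hα1 : α = ((j : ℝ) + 1) := by rw [hint, hj]; push_cast; ring
    have hGα : Real.Gamma α = (Nat.factorial j : ℝ) := by
      rw [hα1, Real.Gamma_nat_eq_factorial]
    rw [hGα, ← intervalIntegral.integral_const_mul]
    refine intervalIntegral.integral_congr fun t ht => ?_
    simp only [rightCaputoDeriv, if_pos hint]
    rw [show α - 1 = ((j : ℕ) : ℝ) by rw [hα1]; push_cast; ring, Real.rpow_natCast, hj]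
    field_simp
  · -- fractional order
    have hαle : α ≤ (⌈α⌉₊ : ℝ) := Nat.le_ceil α
    have hq : 0 < (⌈α⌉₊ : ℝ) - α := sub_pos.mpr (lt_of_le_of_ne hαle hint)
    have hGαpos : 0 < Real.Gamma α := Real.Gamma_pos_of_pos hα
    have hGqpos : 0 < Real.Gamma ((⌈α⌉₊ : ℝ) - α) := Real.Gamma_pos_of_pos hq
    have hpq : 1 ≤ α + ((⌈α⌉₊ : ℝ) - α) := by
      rw [hj]; push_cast; linarith
    have e1 : (∫ t in x..b, (t - x) ^ (α - 1) * rightCaputoDeriv α a b f t)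
        = ((-1 : ℝ) ^ (⌈α⌉₊ : ℕ) / Real.Gamma ((⌈α⌉₊ : ℝ) - α)) *
            ∫ t in x..b, (t - x) ^ (α - 1) *
              ∫ s in t..b, (s - t) ^ (((⌈α⌉₊ : ℝ) - α) - 1) *
                iteratedDerivWithin ⌈α⌉₊ f (Set.Icc a b) s := by
      rw [← intervalIntegral.integral_const_mul]
      refine intervalIntegral.integral_congr fun t ht => ?_
      simp only [rightCaputoDeriv, if_neg hint]
      rw [show ((⌈α⌉₊ : ℝ) - α) - 1 = (⌈α⌉₊ : ℝ) - α - 1 by ring]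
      ring
    have hsw := swap_kernel (p := α) (q := (⌈α⌉₊ : ℝ) - α) hα hq hpq hxb hg
    rw [e1, hsw]
    have hGsum : Real.Gamma (α + ((⌈α⌉₊ : ℝ) - α)) = (Nat.factorial j : ℝ) := by
      rw [show α + ((⌈α⌉₊ : ℝ) - α) = ((j : ℝ) + 1) by rw [hj]; push_cast; ring,
        Real.Gamma_nat_eq_factorial]
    have hexp : α + ((⌈α⌉₊ : ℝ) - α) - 1 = ((j : ℕ) : ℝ) := by rw [hj]; push_cast; ring
    rw [hGsum]
    have e2 : (∫ s in x..b, (s - x) ^ (α + ((⌈α⌉₊ : ℝ) - α) - 1) *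
          iteratedDerivWithin ⌈α⌉₊ f (Set.Icc a b) s)
        = ∫ s in x..b, (s - x) ^ j * iteratedDerivWithin ⌈α⌉₊ f (Set.Icc a b) s := by
      refine intervalIntegral.integral_congr fun s hs => ?_
      rw [hexp, Real.rpow_natCast]
    rw [e2]
    rw [show (∫ s in x..b, ((-1 : ℝ) ^ (⌈α⌉₊ : ℕ) * (s - x) ^ j / (Nat.factorial j)) *
          iteratedDerivWithin ⌈α⌉₊ f (Set.Icc a b) s)
        = ((-1 : ℝ) ^ (⌈α⌉₊ : ℕ) / (Nat.factorial j)) *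
            ∫ s in x..b, (s - x) ^ j * iteratedDerivWithin ⌈α⌉₊ f (Set.Icc a b) s by
      rw [← intervalIntegral.integral_const_mul]
      exact intervalIntegral.integral_congr fun s hs => by ring]
    rw [hj] at hGqpos ⊢
    push_cast at hGqpos ⊢
    field_simp [hGαpos.ne', hGqpos.ne']
end

section
/- Let α ≥ 1, m = ⌈α⌉, and suppose f : [a,b] → ℝ is such that f^{(m-1)} is absolutely continuous on [a,b], f^{(k)}(b) = 0 for k = 1, ..., m-1, and D_{b-}^α f ∈ L¹([a,b]). Then |f(b) - (1/(b-a)) ∫_a^b f(u) du| ≤ (‖D_{b-}^α f‖_{L¹([a,b])} / Γ(α+1)) (b-a)^{α-1}. -/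
open MeasureTheory intervalIntegral Set

section OstrowskiAux

lemma realBeta (u v : ℝ) (hu : 0 < u) (hv : 0 < v) :
    ∫ x in (0:ℝ)..1, x ^ (u-1) * (1-x) ^ (v-1)
      = Real.Gamma u * Real.Gamma v / Real.Gamma (u+v) := by
  have hc : ((∫ x in (0:ℝ)..1, x ^ (u-1) * (1-x) ^ (v-1) : ℝ) : ℂ)
      = Complex.betaIntegral u v := by
    rw [← intervalIntegral.integral_ofReal]
    rw [Complex.betaIntegral]
    refine intervalIntegral.integral_congr fun x hx => ?_
    rw [Set.uIcc_of_le (by norm_num : (0:ℝ) ≤ 1)] at hx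
    push_cast
    rw [Complex.ofReal_cpow hx.1, Complex.ofReal_cpow (by linarith [hx.2] : (0:ℝ) ≤ 1 - x)]
    push_cast
    ring
  have h := Complex.Gamma_mul_Gamma_eq_betaIntegral
    (by simpa using hu : 0 < (u:ℂ).re) (by simpa using hv : 0 < (v:ℂ).re)
  rw [← hc] at h
  have hpos : Real.Gamma (u+v) ≠ 0 := (Real.Gamma_pos_of_pos (by linarith)).ne'
  have : ((Real.Gamma u * Real.Gamma v : ℝ) : ℂ)
      = ((Real.Gamma (u+v) * ∫ x in (0:ℝ)..1, x ^ (u-1) * (1-x) ^ (v-1) : ℝ) : ℂ) := by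
    push_cast
    rw [← Complex.Gamma_ofReal, ← Complex.Gamma_ofReal, ← Complex.Gamma_ofReal] at *
    convert h using 2
    push_cast; ring
  have hr := Complex.ofReal_inj.mp this
  field_simp at hr ⊢
  linarith [hr]

lemma realBeta_scaled (u v x s : ℝ) (hu : 0 < u) (hv : 0 < v) (hxs : x < s) :
    ∫ t in x..s, (t-x) ^ (u-1) * (s-t) ^ (v-1)
      = (s-x) ^ (u+v-1) * (Real.Gamma u * Real.Gamma v / Real.Gamma (u+v)) := by
  have hsx : (0:ℝ) < s - x := by linarith
  have key := intervalIntegral.integral_comp_mul_add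
    (a := (0:ℝ)) (b := 1) (fun t => (t-x) ^ (u-1) * (s-t) ^ (v-1)) hsx.ne' x
  simp only [mul_zero, zero_add, mul_one, sub_add_cancel] at key
  have hL : ∫ w in (0:ℝ)..1, ((s-x) * w + x - x) ^ (u-1) * (s - ((s-x) * w + x)) ^ (v-1)
      = (s-x) ^ (u-1) * (s-x) ^ (v-1)
        * (Real.Gamma u * Real.Gamma v / Real.Gamma (u+v)) := by
    rw [← realBeta u v hu hv, ← intervalIntegral.integral_const_mul]
    refine intervalIntegral.integral_congr fun w hw => ?_
    rw [Set.uIcc_of_le (by norm_num : (0:ℝ) ≤ 1)] at hw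
    have h1 : (s-x) * w + x - x = (s-x) * w := by ring
    have h2 : s - ((s-x) * w + x) = (s-x) * (1-w) := by ring
    rw [h1, h2, Real.mul_rpow hsx.le hw.1, Real.mul_rpow hsx.le (by linarith [hw.2])]
    ring
  rw [hL] at key
  have : ∫ t in x..s, (t-x) ^ (u-1) * (s-t) ^ (v-1)
      = (s-x) * ((s-x) ^ (u-1) * (s-x) ^ (v-1)
        * (Real.Gamma u * Real.Gamma v / Real.Gamma (u+v))) := by
    rw [smul_eq_mul] at key
    rw [key, ← mul_assoc, mul_inv_cancel₀ hsx.ne', one_mul]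
  rw [this]
  rw [show (s-x) * ((s-x) ^ (u-1) * (s-x) ^ (v-1) * (Real.Gamma u * Real.Gamma v / Real.Gamma (u+v)))
      = ((s-x) ^ (1:ℝ) * ((s-x) ^ (u-1) * (s-x) ^ (v-1))) * (Real.Gamma u * Real.Gamma v / Real.Gamma (u+v))
    from by rw [Real.rpow_one]; ring]
  congr 1
  rw [← Real.rpow_add hsx, ← Real.rpow_add hsx]
  congr 1
  ring

-- ∫ t in x..s, (s-t)^ρ dt = (s-x)^(ρ+1)/(ρ+1)
lemma integral_rpow_sub (x s ρ : ℝ) (hρ : -1 < ρ) (hxs : x ≤ s) :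
    ∫ t in x..s, (s-t) ^ ρ = (s-x) ^ (ρ+1) / (ρ+1) := by
  have := intervalIntegral.integral_comp_sub_left (a := x) (b := s) (fun v => v ^ ρ) s
  rw [this, sub_self, integral_rpow (Or.inl hρ),
    Real.zero_rpow (by linarith : ρ + 1 ≠ 0), sub_zero]

section triangle
variable {x b ρ : ℝ} {h : ℝ → ℝ}

/-- The triangle kernel as a function on the product. -/
noncomputable def triK (x ρ : ℝ) (h : ℝ → ℝ) : ℝ × ℝ → ℝ :=
  fun p => if p.1 < p.2 then (p.2 - p.1) ^ ρ * h p.2 else 0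

lemma triK_aesm (hρ : 0 ≤ ρ) (hh : IntegrableOn h (Ioc x b)) :
    AEStronglyMeasurable (triK x ρ h)
      ((volume.restrict (Ioc x b)).prod (volume.restrict (Ioc x b))) := by
  have h1 : AEStronglyMeasurable (fun p : ℝ × ℝ => (p.2 - p.1) ^ ρ * h p.2)
      ((volume.restrict (Ioc x b)).prod (volume.restrict (Ioc x b))) := by
    exact (Measurable.aestronglyMeasurable (by fun_prop)).mul hh.aestronglyMeasurable.comp_snd
  have : triK x ρ h = Set.indicator {p : ℝ × ℝ | p.1 < p.2}
      (fun p => (p.2 - p.1) ^ ρ * h p.2) := by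
    ext p; rw [Set.indicator_apply]; rfl
  rw [this]
  exact h1.indicator (measurableSet_lt measurable_fst measurable_snd)

lemma triK_integrable (hρ : 0 ≤ ρ) (hxb : x ≤ b) (hh : IntegrableOn h (Ioc x b)) :
    Integrable (triK x ρ h)
      ((volume.restrict (Ioc x b)).prod (volume.restrict (Ioc x b))) := by
  refine Integrable.mono'
    (g := fun p : ℝ × ℝ => (b - x) ^ ρ * |h p.2|)
    (Integrable.mul_prod (integrable_const _) hh.abs) (triK_aesm hρ hh) ?_
  rw [Measure.prod_restrict]
  filter_upwards [ae_restrict_mem (measurableSet_Ioc.prod measurableSet_Ioc)] with p hp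
  obtain ⟨hp1, hp2⟩ := hp
  by_cases hlt : p.1 < p.2
  · rw [triK, if_pos hlt]
    rw [Real.norm_eq_abs, abs_mul, abs_of_nonneg (Real.rpow_nonneg (by linarith) ρ)]
    apply mul_le_mul_of_nonneg_right _ (abs_nonneg _)
    exact Real.rpow_le_rpow (by linarith) (by linarith [hp1.1, hp2.2]) hρ
  · rw [triK, if_neg hlt]
    simp only [norm_zero]
    exact mul_nonneg (Real.rpow_nonneg (by linarith) ρ) (abs_nonneg _)

/-- section computation: for `u ∈ Ioc x b`. -/
lemma triK_sect (hxb : x ≤ b) (u : ℝ) (hu : u ∈ Ioc x b) :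
    ∫ s in Ioc x b, triK x ρ h (u, s) = ∫ s in u..b, (s - u) ^ ρ * h s := by
  have : (fun s => triK x ρ h (u, s))
      = Set.indicator (Ioi u) (fun s => (s - u) ^ ρ * h s) := by
    ext s; simp only [Set.indicator_apply, Set.mem_Ioi]; rfl
  rw [this, setIntegral_indicator measurableSet_Ioi, Set.Ioc_inter_Ioi,
    sup_eq_right.mpr hu.1.le, intervalIntegral.integral_of_le hu.2]

lemma triK_marginal_integrable (hρ : 0 ≤ ρ) (hxb : x ≤ b) (hh : IntegrableOn h (Ioc x b)) :
    IntegrableOn (fun u => ∫ s in u..b, (s - u) ^ ρ * h s) (Ioc x b) volume := by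
  refine ((triK_integrable hρ hxb hh).integral_prod_left).congr ?_
  filter_upwards [ae_restrict_mem measurableSet_Ioc] with u hu
  exact triK_sect hxb u hu

lemma fubini_triangle (hρ : 0 ≤ ρ) (hxb : x ≤ b) (hh : IntegrableOn h (Ioc x b)) :
    ∫ u in x..b, ∫ s in u..b, (s - u) ^ ρ * h s
      = ∫ s in x..b, (s - x) ^ (ρ+1) / (ρ+1) * h s := by
  rw [intervalIntegral.integral_of_le hxb, intervalIntegral.integral_of_le hxb]
  rw [setIntegral_congr_fun measurableSet_Ioc
    (fun u hu => (triK_sect hxb u hu).symm)]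
  rw [MeasureTheory.integral_integral_swap (f := fun u s => triK x ρ h (u, s))
    (by exact triK_integrable hρ hxb hh)]
  refine setIntegral_congr_fun measurableSet_Ioc (fun s hs => ?_)
  have h1 : (fun u => triK x ρ h (u, s))
      = Set.indicator (Iio s) (fun u => (s - u) ^ ρ * h s) := by
    ext u; simp only [Set.indicator_apply, Set.mem_Iio]; rfl
  have h2 : Ioc x b ∩ Iio s = Ioo x s := by
    ext t
    simp only [mem_inter_iff, mem_Ioc, mem_Iio, mem_Ioo]
    exact ⟨fun ⟨⟨a1, a2⟩, a3⟩ => ⟨a1, a3⟩, fun ⟨a1, a3⟩ => ⟨⟨a1, a3.le.trans hs.2⟩, a3⟩⟩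
  rw [h1, setIntegral_indicator measurableSet_Iio, h2, ← integral_Ioc_eq_integral_Ioo,
    ← intervalIntegral.integral_of_le hs.1.le, intervalIntegral.integral_mul_const,
    integral_rpow_sub x s ρ (by linarith) hs.1.le]

end triangle

section betaf
variable {x b α β : ℝ} {g : ℝ → ℝ}

/-- beta kernel, in (s, t) order: `q.1 = s` (outer), `q.2 = t` (inner). -/
noncomputable def betaK (x α β : ℝ) (g : ℝ → ℝ) : ℝ × ℝ → ℝ :=
  fun q => if q.2 < q.1 then (q.2 - x) ^ (α-1) * ((q.1 - q.2) ^ (β-1) * g q.1) else 0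

lemma betaK_aesm (hg : IntegrableOn g (Ioc x b)) :
    AEStronglyMeasurable (betaK x α β g)
      ((volume.restrict (Ioc x b)).prod (volume.restrict (Ioc x b))) := by
  have h1 : AEStronglyMeasurable
      (fun q : ℝ × ℝ => (q.2 - x) ^ (α-1) * ((q.1 - q.2) ^ (β-1) * g q.1))
      ((volume.restrict (Ioc x b)).prod (volume.restrict (Ioc x b))) :=
    (Measurable.aestronglyMeasurable (by fun_prop)).mul
      ((Measurable.aestronglyMeasurable (by fun_prop)).mul hg.aestronglyMeasurable.comp_fst)
  have heq : betaK x α β g = Set.indicator {q : ℝ × ℝ | q.2 < q.1}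
      (fun q => (q.2 - x) ^ (α-1) * ((q.1 - q.2) ^ (β-1) * g q.1)) := by
    ext q; simp only [Set.indicator_apply, Set.mem_setOf_eq]; rfl
  rw [heq]
  exact h1.indicator (measurableSet_lt measurable_snd measurable_fst)

lemma rpow_kernel_integrable (hβ : 0 < β) {s : ℝ} (hxs : x ≤ s) :
    IntegrableOn (fun t => (s - t) ^ (β-1)) (Ioc x s) volume := by
  have h3 : IntervalIntegrable (fun t => (s - t) ^ (β-1)) volume x s := by
    have := (intervalIntegral.intervalIntegrable_rpow' (a := s - x) (b := 0)
      (r := β - 1) (by linarith)).comp_sub_left s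
    simpa [sub_sub_cancel] using this
  exact h3.1

lemma betaK_core_integrable (hα : 1 ≤ α) (hβ : 0 < β) (hxb : x ≤ b)
    {s : ℝ} (hs : s ∈ Ioc x b) :
    IntegrableOn (fun t => (t - x) ^ (α-1) * ((s - t) ^ (β-1) * g s)) (Ioo x s) volume := by
  refine Integrable.mono'
    (g := fun t => ((b - x) ^ (α-1) * |g s|) * (s - t) ^ (β-1))
    (((rpow_kernel_integrable hβ hs.1.le).mono_set Ioo_subset_Ioc_self).const_mul _)
    (Measurable.aestronglyMeasurable (by fun_prop)) ?_
  filter_upwards [ae_restrict_mem measurableSet_Ioo] with t ht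
  have h1 : (0:ℝ) ≤ t - x := by linarith [ht.1]
  have h2 : (0:ℝ) ≤ s - t := by linarith [ht.2]
  rw [Real.norm_eq_abs, abs_mul, abs_mul, abs_of_nonneg (Real.rpow_nonneg h1 _),
    abs_of_nonneg (Real.rpow_nonneg h2 _)]
  have h3 : (t - x) ^ (α-1) ≤ (b - x) ^ (α-1) :=
    Real.rpow_le_rpow h1 (by linarith [ht.2, hs.2]) (by linarith)
  calc (t - x) ^ (α-1) * ((s - t) ^ (β-1) * |g s|)
      ≤ (b - x) ^ (α-1) * ((s - t) ^ (β-1) * |g s|) :=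
        mul_le_mul_of_nonneg_right h3 (mul_nonneg (Real.rpow_nonneg h2 _) (abs_nonneg _))
    _ = (b - x) ^ (α-1) * |g s| * (s - t) ^ (β-1) := by ring

lemma Ioc_inter_Iio_eq (hs : s ≤ b) : Ioc x b ∩ Iio s = Ioo x s := by
  ext t
  simp only [mem_inter_iff, mem_Ioc, mem_Iio, mem_Ioo]
  exact ⟨fun ⟨⟨a1, _⟩, a3⟩ => ⟨a1, a3⟩, fun ⟨a1, a3⟩ => ⟨⟨a1, a3.le.trans hs⟩, a3⟩⟩

lemma betaK_sect_integrable (hα : 1 ≤ α) (hβ : 0 < β) (hxb : x ≤ b)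
    {s : ℝ} (hs : s ∈ Ioc x b) :
    Integrable (fun t => betaK x α β g (s, t)) (volume.restrict (Ioc x b)) := by
  have heq : (fun t => betaK x α β g (s, t))
      = Set.indicator (Iio s) (fun t => (t - x) ^ (α-1) * ((s - t) ^ (β-1) * g s)) := by
    ext t; simp only [Set.indicator_apply, Set.mem_Iio]; rfl
  rw [heq, integrable_indicator_iff measurableSet_Iio, IntegrableOn,
    Measure.restrict_restrict measurableSet_Iio, Set.inter_comm,
    Ioc_inter_Iio_eq hs.2]
  exact betaK_core_integrable hα hβ hxb hs

lemma betaK_integrable_s4 (hα : 1 ≤ α) (hβ : 0 < β) (hxb : x ≤ b)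
    (hg : IntegrableOn g (Ioc x b)) :
    Integrable (betaK x α β g)
      ((volume.restrict (Ioc x b)).prod (volume.restrict (Ioc x b))) := by
  refine (integrable_prod_iff (betaK_aesm hg)).mpr ⟨?_, ?_⟩
  · filter_upwards [ae_restrict_mem measurableSet_Ioc] with s hs
    exact betaK_sect_integrable hα hβ hxb hs
  · refine Integrable.mono'
      (g := fun s => ((b - x) ^ (α-1) * ((b - x) ^ β / β)) * |g s|)
      (hg.abs.const_mul _) ((betaK_aesm hg).norm.integral_prod_right') ?_
    filter_upwards [ae_restrict_mem measurableSet_Ioc] with s hs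
    rw [Real.norm_eq_abs, abs_of_nonneg (integral_nonneg (fun t => norm_nonneg _))]
    have heq : (fun t => ‖betaK x α β g (s, t)‖)
        = Set.indicator (Iio s)
          (fun t => ‖(t - x) ^ (α-1) * ((s - t) ^ (β-1) * g s)‖) := by
      ext t
      simp only [Set.indicator_apply, Set.mem_Iio, betaK]
      by_cases h : t < s <;> simp [h]
    rw [heq, setIntegral_indicator measurableSet_Iio, Ioc_inter_Iio_eq hs.2]
    have hb1 : ∀ t ∈ Ioo x s, ‖(t - x) ^ (α-1) * ((s - t) ^ (β-1) * g s)‖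
        ≤ ((b - x) ^ (α-1) * |g s|) * (s - t) ^ (β-1) := by
      intro t ht
      have h1 : (0:ℝ) ≤ t - x := by linarith [ht.1]
      have h2 : (0:ℝ) ≤ s - t := by linarith [ht.2]
      rw [Real.norm_eq_abs, abs_mul, abs_mul, abs_of_nonneg (Real.rpow_nonneg h1 _),
        abs_of_nonneg (Real.rpow_nonneg h2 _)]
      calc (t - x) ^ (α-1) * ((s - t) ^ (β-1) * |g s|)
          ≤ (b - x) ^ (α-1) * ((s - t) ^ (β-1) * |g s|) :=
            mul_le_mul_of_nonneg_right
              (Real.rpow_le_rpow h1 (by linarith [ht.2, hs.2]) (by linarith))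
              (mul_nonneg (Real.rpow_nonneg h2 _) (abs_nonneg _))
        _ = (b - x) ^ (α-1) * |g s| * (s - t) ^ (β-1) := by ring
    calc ∫ t in Ioo x s, ‖(t - x) ^ (α-1) * ((s - t) ^ (β-1) * g s)‖
        ≤ ∫ t in Ioo x s, ((b - x) ^ (α-1) * |g s|) * (s - t) ^ (β-1) := by
          refine setIntegral_mono_on
            (betaK_core_integrable hα hβ hxb hs).norm
            ((((rpow_kernel_integrable hβ hs.1.le).mono_set
              Ioo_subset_Ioc_self)).const_mul _) measurableSet_Ioo hb1
      _ = ((b - x) ^ (α-1) * |g s|) * ∫ t in Ioo x s, (s - t) ^ (β-1) := by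
          rw [MeasureTheory.integral_const_mul]
      _ ≤ (b - x) ^ (α-1) * ((b - x) ^ β / β) * |g s| := by
          rw [← integral_Ioc_eq_integral_Ioo, ← intervalIntegral.integral_of_le hs.1.le,
            integral_rpow_sub x s (β-1) (by linarith) hs.1.le, sub_add_cancel]
          have h4 : (s - x) ^ β / β ≤ (b - x) ^ β / β :=
            (div_le_div_iff_of_pos_right hβ).mpr
              (Real.rpow_le_rpow (by linarith [hs.1]) (by linarith [hs.2]) hβ.le)
          calc (b - x) ^ (α-1) * |g s| * ((s - x) ^ β / β)
              ≤ (b - x) ^ (α-1) * |g s| * ((b - x) ^ β / β) :=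
                mul_le_mul_of_nonneg_left h4
                  (mul_nonneg (Real.rpow_nonneg (by linarith) _) (abs_nonneg _))
            _ = (b - x) ^ (α-1) * ((b - x) ^ β / β) * |g s| := by ring



lemma beta_fubini {x b α β : ℝ} {g : ℝ → ℝ} (hα : 1 ≤ α) (hβ : 0 < β) (hxb : x ≤ b)
    (hg : IntegrableOn g (Ioc x b)) :
    ∫ t in Ioc x b, (t - x) ^ (α-1) * ∫ s in t..b, (s - t) ^ (β-1) * g s
      = (Real.Gamma α * Real.Gamma β / Real.Gamma (α+β))
          * ∫ s in Ioc x b, (s - x) ^ (α+β-1) * g s := by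
  have hα0 : (0:ℝ) < α := by linarith
  have step1 : ∀ t ∈ Ioc x b,
      (t - x) ^ (α-1) * ∫ s in t..b, (s - t) ^ (β-1) * g s
        = ∫ s in Ioc x b, betaK x α β g (s, t) := by
    intro t ht
    have heq : (fun s => betaK x α β g (s, t))
        = Set.indicator (Ioi t) (fun s => (t - x) ^ (α-1) * ((s - t) ^ (β-1) * g s)) := by
      ext s; simp only [Set.indicator_apply, Set.mem_Ioi]; rfl
    rw [heq, setIntegral_indicator measurableSet_Ioi, Set.Ioc_inter_Ioi,
      sup_eq_right.mpr ht.1.le, ← intervalIntegral.integral_of_le ht.2,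
      intervalIntegral.integral_const_mul]
  rw [setIntegral_congr_fun measurableSet_Ioc step1]
  rw [MeasureTheory.integral_integral_swap (f := fun t s => betaK x α β g (s, t))
    (by exact (betaK_integrable_s4 hα hβ hxb hg).swap)]
  have step2 : ∀ s ∈ Ioc x b,
      (∫ t in Ioc x b, betaK x α β g (s, t))
        = (Real.Gamma α * Real.Gamma β / Real.Gamma (α+β)) * ((s - x) ^ (α+β-1) * g s) := by
    intro s hs
    have heq : (fun t => betaK x α β g (s, t))
        = Set.indicator (Iio s) (fun t => (t - x) ^ (α-1) * ((s - t) ^ (β-1) * g s)) := by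
      ext t; simp only [Set.indicator_apply, Set.mem_Iio]; rfl
    rw [heq, setIntegral_indicator measurableSet_Iio, Ioc_inter_Iio_eq hs.2,
      ← integral_Ioc_eq_integral_Ioo, ← intervalIntegral.integral_of_le hs.1.le]
    have : ∀ t, (t - x) ^ (α-1) * ((s - t) ^ (β-1) * g s)
        = ((t - x) ^ (α-1) * (s - t) ^ (β-1)) * g s := fun t => by ring
    rw [intervalIntegral.integral_congr (fun t _ => this t),
      intervalIntegral.integral_mul_const, realBeta_scaled α β x s hα0 hβ hs.1]
    ring
  rw [setIntegral_congr_fun measurableSet_Ioc step2, MeasureTheory.integral_const_mul]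

end betaf

section tay
variable {a b : ℝ} {m : ℕ} {f : ℝ → ℝ}

lemma ftc_k (hab : a < b) (hm : 1 ≤ m)
    (cd : ContDiffOn ℝ (m-1 : ℕ) f (Icc a b))
    (hint : IntervalIntegrable (iteratedDerivWithin m f (Icc a b)) volume a b)
    (hAC : ∀ x ∈ Icc a b,
      iteratedDerivWithin (m-1) f (Icc a b) x
        = iteratedDerivWithin (m-1) f (Icc a b) a
          + ∫ t in a..x, iteratedDerivWithin m f (Icc a b) t)
    (k : ℕ) (hk : k < m) {x : ℝ} (hx : x ∈ Icc a b) :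
    iteratedDerivWithin k f (Icc a b) b - iteratedDerivWithin k f (Icc a b) x
      = ∫ u in x..b, iteratedDerivWithin (k+1) f (Icc a b) u := by
  have uniq := uniqueDiffOn_Icc hab
  rcases eq_or_lt_of_le (Nat.lt_iff_add_one_le.mp hk) with hkm | hkm
  · -- k + 1 = m
    have hk1 : k = m - 1 := by omega
    subst hk1
    have hmm : m - 1 + 1 = m := by omega
    rw [hmm]
    rw [hAC x hx, hAC b (right_mem_Icc.mpr hab.le)]
    have h1 : IntervalIntegrable (iteratedDerivWithin m f (Icc a b)) volume a x :=
      hint.mono_set (by rw [Set.uIcc_of_le hx.1, Set.uIcc_of_le hab.le]; exact Icc_subset_Icc_right hx.2)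
    have := intervalIntegral.integral_interval_sub_left hint h1
    linarith [this]
  · -- k + 1 ≤ m - 1
    have hk1 : (k:ℕ) + 1 ≤ m - 1 := by omega
    have hcont : ContinuousOn (iteratedDerivWithin (k+1) f (Icc a b)) (Icc a b) :=
      cd.continuousOn_iteratedDerivWithin (by exact_mod_cast Nat.cast_le.mpr hk1) uniq
    have hsub : Icc x b ⊆ Icc a b := Icc_subset_Icc hx.1 le_rfl
    refine (intervalIntegral.integral_eq_sub_of_hasDeriv_right_of_le hx.2
      ((cd.continuousOn_iteratedDerivWithin
        (by exact_mod_cast Nat.cast_le.mpr (by omega : k ≤ m - 1)) uniq).mono hsub)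
      (fun t ht => ?_) ((hcont.mono hsub).intervalIntegrable_of_Icc hx.2)).symm
    have htmem : t ∈ Icc a b := ⟨by linarith [ht.1, hx.1], ht.2.le⟩
    have hdiff : DifferentiableWithinAt ℝ (iteratedDerivWithin k f (Icc a b)) (Icc a b) t :=
      cd.differentiableOn_iteratedDerivWithin (by exact_mod_cast (show k < m - 1 by omega)) uniq t htmem
    have hd : HasDerivWithinAt (iteratedDerivWithin k f (Icc a b))
        (iteratedDerivWithin (k+1) f (Icc a b) t) (Icc a b) t := by
      rw [iteratedDerivWithin_succ]
      exact hdiff.hasDerivWithinAt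
    have hmem : Icc a b ∈ nhds t := Icc_mem_nhds (by linarith [ht.1, hx.1]) ht.2
    exact ((hd.hasDerivAt hmem).hasDerivWithinAt)

lemma taylor_aux (hab : a < b) (hm : 1 ≤ m)
    (cd : ContDiffOn ℝ (m-1 : ℕ) f (Icc a b))
    (hint : IntervalIntegrable (iteratedDerivWithin m f (Icc a b)) volume a b)
    (hAC : ∀ x ∈ Icc a b,
      iteratedDerivWithin (m-1) f (Icc a b) x
        = iteratedDerivWithin (m-1) f (Icc a b) a
          + ∫ t in a..x, iteratedDerivWithin m f (Icc a b) t)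
    (hfb : ∀ k : ℕ, 1 ≤ k → k < m → iteratedDerivWithin k f (Icc a b) b = 0) :
    ∀ n, n ≤ m - 1 → ∀ x ∈ Icc a b,
      iteratedDerivWithin (m-1-n) f (Icc a b) x
        = iteratedDerivWithin (m-1-n) f (Icc a b) b
          + ((-1:ℝ)^(n+1) / (n.factorial : ℝ))
            * ∫ u in x..b, (u - x)^n * iteratedDerivWithin m f (Icc a b) u := by
  intro n
  induction n with
  | zero =>
    intro _ x hx
    have h0 : m - 1 < m := by omega
    have key := ftc_k hab hm cd hint hAC (m-1) h0 hx
    rw [show m - 1 + 1 = m by omega] at key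
    have heq : ∫ u in x..b, (u - x)^(0:ℕ) * iteratedDerivWithin m f (Icc a b) u
        = ∫ u in x..b, iteratedDerivWithin m f (Icc a b) u :=
      intervalIntegral.integral_congr (fun u _ => by simp)
    simp only [Nat.sub_zero, Nat.factorial_zero, Nat.cast_one, div_one]
    rw [heq, zero_add, pow_one]
    linarith [key]
  | succ n IH =>
    intro hn1 x hx
    have hkm : m - 1 - (n+1) < m := by omega
    have hkk : m - 1 - (n+1) + 1 = m - 1 - n := by omega
    have hIH := IH (by omega)
    have hbd : iteratedDerivWithin (m-1-n) f (Icc a b) b = 0 :=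
      hfb _ (by omega) (by omega)
    have hftc := ftc_k hab hm cd hint hAC (m-1-(n+1)) hkm hx
    rw [hkk] at hftc
    -- rewrite the integrand using IH
    have hsub : Icc x b ⊆ Icc a b := Icc_subset_Icc hx.1 le_rfl
    have hcongr : ∫ u in x..b, iteratedDerivWithin (m-1-n) f (Icc a b) u
        = ∫ u in x..b, ((-1:ℝ)^(n+1) / (n.factorial : ℝ))
            * ∫ s in u..b, (s - u)^n * iteratedDerivWithin m f (Icc a b) s := by
      refine intervalIntegral.integral_congr (fun u hu => ?_)
      rw [Set.uIcc_of_le hx.2] at hu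
      rw [hIH u (hsub hu), hbd, zero_add]
    rw [hcongr, intervalIntegral.integral_const_mul] at hftc
    -- Fubini
    have hg' : IntegrableOn (iteratedDerivWithin m f (Icc a b)) (Ioc x b) volume :=
      (hint.mono_set (by rw [Set.uIcc_of_le hx.2, Set.uIcc_of_le hab.le]; exact Icc_subset_Icc_left hx.1)).1
    have hfub := fubini_triangle (x := x) (b := b) (ρ := (n:ℝ))
      (h := iteratedDerivWithin m f (Icc a b)) (Nat.cast_nonneg n) hx.2 hg'
    have hr1 : ∫ u in x..b, ∫ s in u..b,
        (s - u) ^ (n:ℝ) * iteratedDerivWithin m f (Icc a b) s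
        = ∫ u in x..b, ∫ s in u..b, (s - u) ^ n * iteratedDerivWithin m f (Icc a b) s :=
      intervalIntegral.integral_congr (fun u _ =>
        intervalIntegral.integral_congr (fun s _ => by rw [Real.rpow_natCast]))
    have hr2 : ∫ s in x..b, (s - x) ^ ((n:ℝ)+1) / ((n:ℝ)+1) * iteratedDerivWithin m f (Icc a b) s
        = ∫ s in x..b, (s - x) ^ (n+1) / ((n:ℝ)+1) * iteratedDerivWithin m f (Icc a b) s :=
      intervalIntegral.integral_congr (fun s _ => by
        rw [show ((n:ℝ)+1) = ((n+1:ℕ):ℝ) by push_cast; ring, Real.rpow_natCast])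
    rw [hr1, hr2] at hfub
    rw [hfub] at hftc
    have hfin : ∫ s in x..b, (s - x) ^ (n+1) / ((n:ℝ)+1) * iteratedDerivWithin m f (Icc a b) s
        = (1/((n:ℝ)+1)) * ∫ s in x..b, (s - x) ^ (n+1) * iteratedDerivWithin m f (Icc a b) s := by
      rw [← intervalIntegral.integral_const_mul]
      exact intervalIntegral.integral_congr (fun s _ => by ring)
    rw [hfin] at hftc
    have hnfac : ((n+1).factorial : ℝ) = ((n:ℝ)+1) * (n.factorial : ℝ) := by
      rw [Nat.factorial_succ]; push_cast; ring
    have hne : ((n:ℝ)+1) ≠ 0 := by positivity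
    have hfne : ((n.factorial : ℝ)) ≠ 0 := by positivity
    have : iteratedDerivWithin (m-1-(n+1)) f (Icc a b) x
        = iteratedDerivWithin (m-1-(n+1)) f (Icc a b) b
          - ((-1:ℝ)^(n+1) / (n.factorial : ℝ)) * ((1/((n:ℝ)+1))
            * ∫ s in x..b, (s - x) ^ (n+1) * iteratedDerivWithin m f (Icc a b) s) := by
      linarith [hftc]
    rw [this, hnfac]
    field_simp
    ring
end tay

end OstrowskiAux

/-- **Right Caputo fractional Ostrowski inequality, `L¹` case.** -/
theorem rightCaputo_ostrowski_L1 (α : ℝ) (hα : 1 ≤ α) (a b : ℝ) (hab : a < b) (f : ℝ → ℝ)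
    (hf : IsACDeriv ⌈α⌉₊ a b f)
    (hfb : ∀ k : ℕ, 1 ≤ k → k < ⌈α⌉₊ → iteratedDerivWithin k f (Set.Icc a b) b = 0)
    (hD : IntervalIntegrable (rightCaputoDeriv α a b f) MeasureTheory.volume a b) :
    |f b - (1 / (b - a)) * ∫ u in a..b, f u|
      ≤ (∫ t in a..b, |rightCaputoDeriv α a b f t|) / Real.Gamma (α + 1)
          * (b - a) ^ (α - 1) := by
  set m : ℕ := ⌈α⌉₊ with hm_def
  set S : Set ℝ := Set.Icc a b with hS_def
  set g : ℝ → ℝ := iteratedDerivWithin m f S with hg_def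
  set D : ℝ → ℝ := rightCaputoDeriv α a b f with hD_def
  obtain ⟨cd, hint, hAC⟩ := hf
  have hα0 : (0:ℝ) < α := by linarith
  have hm1 : 1 ≤ m := Nat.one_le_ceil_iff.mpr hα0
  have hαm : α ≤ (m:ℝ) := Nat.le_ceil α
  have hΓα : 0 < Real.Gamma α := Real.Gamma_pos_of_pos hα0
  have hba : (0:ℝ) < b - a := by linarith
  have htay := taylor_aux hab hm1 cd hint hAC hfb (m-1) le_rfl
  rw [show m - 1 - (m-1) = 0 by omega, show m - 1 + 1 = m by omega] at htay
  simp only [iteratedDerivWithin_zero] at htay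
  have htay' : ∀ x ∈ Set.Icc a b, f x = f b + ((-1:ℝ)^m / (((m-1).factorial : ℕ) : ℝ))
      * ∫ u in x..b, (u - x)^(m-1) * g u := htay
  -- htay : ∀ x ∈ Icc a b, f x = f b + ((-1)^m / (m-1)!) * ∫ u in x..b, (u-x)^(m-1) * g u
  have hmcast : ((m-1 : ℕ) : ℝ) = (m:ℝ) - 1 := by
    rw [Nat.cast_sub hm1]; norm_num
  have hΓm : Real.Gamma (m:ℝ) = ((m-1).factorial : ℝ) := by
    rw [show ((m:ℝ)) = ((m-1:ℕ):ℝ) + 1 by rw [hmcast]; ring]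
    exact_mod_cast Real.Gamma_nat_eq_factorial (m-1)
  -- Key identity
  have key : ∀ x ∈ Set.Icc a b, Real.Gamma α * (f x - f b)
      = ∫ t in Ioc x b, (t - x) ^ (α-1) * D t := by
    intro x hx
    have hg' : IntegrableOn g (Ioc x b) volume :=
      (hint.mono_set (by rw [Set.uIcc_of_le hx.2, Set.uIcc_of_le hab.le]; exact Icc_subset_Icc_left hx.1)).1
    by_cases hcase : α = (m:ℝ)
    · -- integer case
      have hDt : ∀ t, D t = (-1:ℝ)^m * g t := fun t => by
        rw [hD_def, rightCaputoDeriv, if_pos (by rw [← hm_def]; exact hcase)]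
      have hα1 : α - 1 = ((m-1:ℕ):ℝ) := by rw [hcase, hmcast]
      have hcongr : ∫ t in Ioc x b, (t - x) ^ (α-1) * D t
          = (-1:ℝ)^m * ∫ t in Ioc x b, (t - x) ^ (m-1:ℕ) * g t := by
        rw [← MeasureTheory.integral_const_mul]
        refine setIntegral_congr_fun measurableSet_Ioc (fun t _ => ?_)
        rw [hDt t, hα1, Real.rpow_natCast]; ring
      rw [hcongr, ← intervalIntegral.integral_of_le hx.2, htay' x hx]
      have hfacne : (((m-1).factorial : ℕ) : ℝ) ≠ 0 := by positivity
      rw [hcase, hΓm]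
      field_simp
      ring
    · -- fractional case
      have hαlt : α < (m:ℝ) := lt_of_le_of_ne hαm hcase
      set β : ℝ := (m:ℝ) - α with hβ_def
      have hβ0 : 0 < β := by rw [hβ_def]; linarith
      have hΓβ : 0 < Real.Gamma β := Real.Gamma_pos_of_pos hβ0
      have hDt : ∀ t, D t = ((-1:ℝ)^m / Real.Gamma β)
          * ∫ s in t..b, (s - t) ^ (β-1) * g s := fun t => by
        rw [hD_def, rightCaputoDeriv, if_neg (by rw [← hm_def]; exact hcase)]
      have hcongr : ∫ t in Ioc x b, (t - x) ^ (α-1) * D t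
          = ((-1:ℝ)^m / Real.Gamma β)
            * ∫ t in Ioc x b, (t - x) ^ (α-1) * ∫ s in t..b, (s - t) ^ (β-1) * g s := by
        rw [← MeasureTheory.integral_const_mul]
        refine setIntegral_congr_fun measurableSet_Ioc (fun t _ => ?_)
        rw [hDt t]; ring
      rw [hcongr, beta_fubini hα hβ0 hx.2 hg']
      have hαβ : α + β = (m:ℝ) := by rw [hβ_def]; ring
      rw [hαβ]
      have hpow : ∫ s in Ioc x b, (s - x) ^ ((m:ℝ)-1) * g s
          = ∫ u in x..b, (u - x) ^ (m-1:ℕ) * g u := by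
        have heq := setIntegral_congr_fun (μ := volume) (s := Ioc x b) measurableSet_Ioc
          (f := fun s => (s - x) ^ ((m:ℝ)-1) * g s) (g := fun s => (s - x) ^ (m-1:ℕ) * g s)
          (fun s _ => by
            show (s - x) ^ ((m:ℝ)-1) * g s = (s - x) ^ (m-1:ℕ) * g s
            rw [← hmcast, Real.rpow_natCast])
        rw [heq, ← intervalIntegral.integral_of_le hx.2]
      rw [hpow, htay' x hx, hΓm]
      have hfacne : (((m-1).factorial : ℕ) : ℝ) ≠ 0 := by positivity
      field_simp
      ring
  -- final assembly
  have hα1 : (0:ℝ) ≤ α - 1 := by linarith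
  have hDabs : IntegrableOn (fun t => |D t|) (Ioc a b) volume := hD.1.abs
  have hbound : ∀ x ∈ Set.Icc a b,
      |f b - f x| ≤ (1/Real.Gamma α) * ∫ s in x..b, (s - x)^(α-1) * |D s| := by
    intro x hx
    have hk := key x hx
    have habs : |∫ t in Ioc x b, (t - x)^(α-1) * D t|
        ≤ ∫ s in x..b, (s - x)^(α-1) * |D s| := by
      calc |∫ t in Ioc x b, (t - x)^(α-1) * D t|
          ≤ ∫ t in Ioc x b, ‖(t - x)^(α-1) * D t‖ := by
            simpa [Real.norm_eq_abs] using
              MeasureTheory.norm_integral_le_integral_norm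
                (μ := volume.restrict (Ioc x b)) (fun t => (t - x)^(α-1) * D t)
        _ = ∫ s in x..b, (s - x)^(α-1) * |D s| := by
            rw [intervalIntegral.integral_of_le hx.2]
            refine setIntegral_congr_fun measurableSet_Ioc (fun t ht => ?_)
            rw [Real.norm_eq_abs, abs_mul,
              abs_of_nonneg (Real.rpow_nonneg (by linarith [ht.1] : (0:ℝ) ≤ t - x) _)]
    have heq : |f b - f x| = (1/Real.Gamma α) * |Real.Gamma α * (f x - f b)| := by
      rw [abs_mul, abs_of_pos hΓα, abs_sub_comm]
      field_simp
    rw [heq, hk]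
    exact mul_le_mul_of_nonneg_left habs (by positivity)
  set H : ℝ → ℝ := fun u => ∫ s in u..b, (s - u)^(α-1) * |D s| with hH_def
  have hHint : IntegrableOn H (Ioc a b) volume := triK_marginal_integrable hα1 hab.le hDabs
  have hHii : IntervalIntegrable H volume a b := by
    rw [intervalIntegrable_iff, uIoc_of_le hab.le]; exact hHint
  have hfc : ContinuousOn f (Icc a b) := cd.continuousOn
  have hfi : IntervalIntegrable f volume a b := hfc.intervalIntegrable_of_Icc hab.le
  have habsfi : IntervalIntegrable (fun u => |f b - f u|) volume a b :=
    ((continuousOn_const.sub hfc).abs).intervalIntegrable_of_Icc hab.le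
  have hsplit : f b - (1/(b-a)) * ∫ u in a..b, f u
      = (1/(b-a)) * ∫ u in a..b, (f b - f u) := by
    rw [intervalIntegral.integral_sub intervalIntegrable_const hfi,
      intervalIntegral.integral_const, smul_eq_mul]
    field_simp
  have h1 : |f b - (1/(b-a)) * ∫ u in a..b, f u|
      ≤ (1/(b-a)) * ∫ u in a..b, |f b - f u| := by
    rw [hsplit, abs_mul, abs_of_pos (by positivity : (0:ℝ) < 1/(b-a))]
    refine mul_le_mul_of_nonneg_left ?_ (by positivity)
    have := intervalIntegral.norm_integral_le_integral_norm
      (f := fun u => f b - f u) (μ := volume) hab.le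
    simpa [Real.norm_eq_abs] using this
  have h2 : ∫ u in a..b, |f b - f u| ≤ (1/Real.Gamma α) * ∫ u in a..b, H u := by
    rw [← intervalIntegral.integral_const_mul]
    exact intervalIntegral.integral_mono_on hab.le habsfi (hHii.const_mul _)
      (fun x hx => hbound x hx)
  have h3 : ∫ u in a..b, H u = ∫ s in a..b, (s - a)^(α-1+1)/(α-1+1) * |D s| :=
    fubini_triangle hα1 hab.le hDabs
  rw [show α - 1 + 1 = α by ring] at h3
  have hLint : IntervalIntegrable (fun s => (s - a)^α/α * |D s|) volume a b := by
    rw [intervalIntegrable_iff, uIoc_of_le hab.le]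
    refine Integrable.mono' ((hD.1.abs).const_mul ((b-a)^α/α))
      ((Measurable.aestronglyMeasurable (by fun_prop)).mul hD.1.abs.aestronglyMeasurable) ?_
    filter_upwards [ae_restrict_mem measurableSet_Ioc] with s hs
    rw [Real.norm_eq_abs, abs_mul, abs_abs,
      abs_of_nonneg (div_nonneg (Real.rpow_nonneg (by linarith [hs.1]) _) hα0.le)]
    refine mul_le_mul_of_nonneg_right ?_ (abs_nonneg _)
    exact (div_le_div_iff_of_pos_right hα0).mpr
      (Real.rpow_le_rpow (by linarith [hs.1]) (by linarith [hs.2]) hα0.le)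
  have h4 : ∫ s in a..b, (s - a)^α/α * |D s|
      ≤ ((b-a)^α/α) * ∫ t in a..b, |D t| := by
    rw [← intervalIntegral.integral_const_mul]
    refine intervalIntegral.integral_mono_on hab.le hLint ((hD.abs).const_mul _)
      (fun s hs => ?_)
    refine mul_le_mul_of_nonneg_right ?_ (abs_nonneg _)
    exact (div_le_div_iff_of_pos_right hα0).mpr
      (Real.rpow_le_rpow (by linarith [hs.1]) (by linarith [hs.2]) hα0.le)
  have hS0 : (0:ℝ) ≤ ∫ t in a..b, |D t| :=
    intervalIntegral.integral_nonneg hab.le (fun t _ => abs_nonneg _)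
  have hchain : |f b - (1/(b-a)) * ∫ u in a..b, f u|
      ≤ (1/(b-a)) * ((1/Real.Gamma α) * (((b-a)^α/α) * ∫ t in a..b, |D t|)) := by
    refine h1.trans ?_
    refine mul_le_mul_of_nonneg_left ?_ (by positivity)
    refine h2.trans ?_
    refine mul_le_mul_of_nonneg_left ?_ (by positivity)
    rw [h3]
    exact h4
  refine hchain.trans (le_of_eq ?_)
  rw [Real.Gamma_add_one hα0.ne']
  rw [show (b-a)^α = (b-a)^(α-1) * (b-a) by
    rw [show α = α - 1 + 1 by ring, Real.rpow_add hba, Real.rpow_one]; ring_nf]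
  field_simp
end

section
/- Let α > 0, m = ⌈α⌉, and suppose f : [a,b] → ℝ is such that f^{(m-1)} is absolutely continuous on [a,b] and f^{(k)}(b) = 0 for k = 1, ..., m-1. Then for every x ∈ [a,b], f(x) - f(b) = (1/Γ(α)) ∫_x^b (t-x)^{α-1} D_{b-}^α f(t) dt. -/
open MeasureTheory intervalIntegral

lemma real_beta {p q : ℝ} (hp : 0 < p) (hq : 0 < q) :
    ∫ t in (0:ℝ)..1, t ^ (p-1) * (1-t) ^ (q-1) = Real.Gamma p * Real.Gamma q / Real.Gamma (p+q) := by
  have key : Complex.Gamma p * Complex.Gamma q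
      = Complex.Gamma (p+q) * Complex.betaIntegral p q := by
    have := Complex.Gamma_mul_Gamma_eq_betaIntegral (s := (p:ℂ)) (t := (q:ℂ))
      (by simpa using hp) (by simpa using hq)
    simpa using this
  have hbeta : Complex.betaIntegral p q
      = ((∫ t in (0:ℝ)..1, t ^ (p-1) * (1-t) ^ (q-1) : ℝ) : ℂ) := by
    rw [Complex.betaIntegral, ← intervalIntegral.integral_ofReal]
    refine intervalIntegral.integral_congr fun t ht => ?_
    rw [Set.uIcc_of_le (by norm_num)] at ht
    rw [Complex.ofReal_mul, Complex.ofReal_cpow ht.1, Complex.ofReal_cpow (by linarith [ht.2] : (0:ℝ) ≤ 1 - t)]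
    push_cast
    ring_nf
  rw [hbeta, ← Complex.ofReal_add, Complex.Gamma_ofReal, Complex.Gamma_ofReal, Complex.Gamma_ofReal] at key
  have hne : Real.Gamma (p+q) ≠ 0 := (Real.Gamma_pos_of_pos (by linarith)).ne'
  have : Real.Gamma p * Real.Gamma q
      = Real.Gamma (p+q) * ∫ t in (0:ℝ)..1, t ^ (p-1) * (1-t) ^ (q-1) := by
    exact_mod_cast key
  field_simp [this]
  rw [this]; ring

lemma beta_scaled {p q x s : ℝ} (hp : 0 < p) (hq : 0 < q) (hxs : x < s) :
    ∫ t in x..s, (t-x) ^ (p-1) * (s-t) ^ (q-1)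
      = (s-x) ^ (p+q-1) * (Real.Gamma p * Real.Gamma q / Real.Gamma (p+q)) := by
  set c := s - x with hc
  have hc0 : 0 < c := by simp [hc]; linarith
  have hsub := intervalIntegral.integral_comp_mul_add (a := 0) (b := 1)
    (fun t => (t-x) ^ (p-1) * (s-t) ^ (q-1)) hc0.ne' x
  have h1 : c*0+x = x := by ring
  have h2 : c*1+x = s := by rw [hc]; ring
  rw [h1, h2] at hsub
  have hcongr : ∫ u in (0:ℝ)..1, (fun t => (t-x) ^ (p-1) * (s-t) ^ (q-1)) (c * u + x)
      = ∫ u in (0:ℝ)..1, (c ^ (p-1) * c ^ (q-1)) * (u ^ (p-1) * (1-u) ^ (q-1)) := by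
    refine intervalIntegral.integral_congr fun u hu => ?_
    rw [Set.uIcc_of_le (by norm_num)] at hu
    have e1 : c * u + x - x = c * u := by ring
    have e2 : s - (c * u + x) = c * (1 - u) := by rw [hc]; ring
    simp only [e1, e2]
    rw [Real.mul_rpow hc0.le hu.1, Real.mul_rpow hc0.le (by linarith [hu.2])]
    ring
  rw [hcongr, intervalIntegral.integral_const_mul, real_beta hp hq] at hsub
  have : (∫ t in x..s, (t-x) ^ (p-1) * (s-t) ^ (q-1))
      = c * (c ^ (p-1) * c ^ (q-1) * (Real.Gamma p * Real.Gamma q / Real.Gamma (p+q))) := by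
    rw [smul_eq_mul] at hsub
    have h := hsub.symm
    rw [inv_mul_eq_iff_eq_mul₀ hc0.ne'] at h
    exact h
  rw [this]
  rw [show c * (c ^ (p-1) * c ^ (q-1) * (Real.Gamma p * Real.Gamma q / Real.Gamma (p+q)))
      = (c ^ (1:ℝ) * c ^ (p-1) * c ^ (q-1)) * (Real.Gamma p * Real.Gamma q / Real.Gamma (p+q))
    by rw [Real.rpow_one]; ring]
  rw [← Real.rpow_add hc0, ← Real.rpow_add hc0]
  ring_nf

lemma left_factor_intble {p x : ℝ} (hp : 0 < p) (u v : ℝ) :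
    IntervalIntegrable (fun t => (t-x) ^ (p-1)) volume u v := by
  have h := (intervalIntegrable_rpow' (a := u - x) (b := v - x)
    (r := p-1) (by linarith)).comp_sub_right x
  simpa using h

lemma right_factor_intble {q s : ℝ} (hq : 0 < q) (u v : ℝ) :
    IntervalIntegrable (fun t => (s-t) ^ (q-1)) volume u v := by
  have h := (intervalIntegrable_rpow' (a := s - u) (b := s - v)
    (r := q-1) (by linarith)).comp_sub_left s
  simpa using h

lemma kernel_intble {p q x s : ℝ} (hp : 0 < p) (hq : 0 < q) (hxs : x ≤ s) :
    IntervalIntegrable (fun t => (t-x) ^ (p-1) * (s-t) ^ (q-1)) volume x s := by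
  rcases eq_or_lt_of_le hxs with h | h
  · subst h; exact IntervalIntegrable.refl
  set m := (x + s) / 2 with hm
  have hxm : x < m := by rw [hm]; linarith
  have hms : m < s := by rw [hm]; linarith
  have h1 : IntervalIntegrable (fun t => (t-x) ^ (p-1) * (s-t) ^ (q-1)) volume x m := by
    refine (left_factor_intble hp x m).mul_continuousOn ?_
    refine ContinuousOn.rpow_const (by fun_prop) fun t ht => Or.inl ?_
    rw [Set.uIcc_of_le hxm.le] at ht
    have : t < s := lt_of_le_of_lt ht.2 hms
    intro hc; rw [sub_eq_zero] at hc; exact this.ne' hc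
  have h2 : IntervalIntegrable (fun t => (t-x) ^ (p-1) * (s-t) ^ (q-1)) volume m s := by
    refine (right_factor_intble hq m s).continuousOn_mul ?_
    refine ContinuousOn.rpow_const (by fun_prop) fun t ht => Or.inl ?_
    rw [Set.uIcc_of_le hms.le] at ht
    have : x < t := lt_of_lt_of_le hxm ht.1
    intro hc; rw [sub_eq_zero] at hc; exact this.ne' hc
  exact h1.trans h2

lemma fubini_kernel {p q x b : ℝ} (hp : 0 < p) (hq : 0 < q) (hpq : 1 ≤ p + q) (hxb : x < b)
    {φ : ℝ → ℝ} (hφ : IntegrableOn φ (Set.Ioc x b)) :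
    ∫ t in x..b, (t-x) ^ (p-1) * ∫ s in t..b, (s-t) ^ (q-1) * φ s
      = (Real.Gamma p * Real.Gamma q / Real.Gamma (p+q)) * ∫ s in x..b, (s-x) ^ (p+q-1) * φ s := by
  set B := Real.Gamma p * Real.Gamma q / Real.Gamma (p+q) with hB
  have hB0 : 0 < B := by
    rw [hB]
    have := Real.Gamma_pos_of_pos hp
    have := Real.Gamma_pos_of_pos hq
    have := Real.Gamma_pos_of_pos (by linarith : (0:ℝ) < p + q)
    positivity
  set K : ℝ × ℝ → ℝ :=
    fun z => if z.1 < z.2 then (z.1-x)^(p-1) * (z.2-z.1)^(q-1) * φ z.2 else 0 with hK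
  -- measurability of K
  have hKm : AEStronglyMeasurable K
      ((volume.restrict (Set.Ioc x b)).prod (volume.restrict (Set.Ioc x b))) := by
    have hind : K = Set.indicator {z : ℝ × ℝ | z.1 < z.2}
        (fun z => (z.1-x)^(p-1) * (z.2-z.1)^(q-1) * φ z.2) := by
      funext z; by_cases h : z.1 < z.2 <;> simp [hK, h, Set.indicator]
    rw [hind]
    refine AEStronglyMeasurable.indicator ?_ (measurableSet_lt measurable_fst measurable_snd)
    have h1 : AEStronglyMeasurable (fun z : ℝ × ℝ => (z.1-x)^(p-1) * (z.2-z.1)^(q-1))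
        ((volume.restrict (Set.Ioc x b)).prod (volume.restrict (Set.Ioc x b))) :=
      Measurable.aestronglyMeasurable (by fun_prop)
    exact h1.mul hφ.aestronglyMeasurable.comp_snd
  -- kernel integral value
  have hkerint : ∀ s ∈ Set.Ioc x b,
      IntegrableOn (fun t => (t-x)^(p-1) * (s-t)^(q-1)) (Set.Ioo x s) := by
    intro s hs
    exact ((intervalIntegrable_iff_integrableOn_Ioc_of_le hs.1.le).mp
      (kernel_intble hp hq hs.1.le)).mono_set Set.Ioo_subset_Ioc_self
  have hker : ∀ s ∈ Set.Ioc x b,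
      ∫ t in Set.Ioo x s, (t-x)^(p-1) * (s-t)^(q-1) = (s-x)^(p+q-1) * B := by
    intro s hs
    rw [← MeasureTheory.integral_Ioc_eq_integral_Ioo,
      ← intervalIntegral.integral_of_le hs.1.le]
    exact beta_scaled hp hq hs.1
  have hIio : ∀ s ∈ Set.Ioc x b, Set.Iio s ∩ Set.Ioc x b = Set.Ioo x s := by
    intro s hs
    ext t
    simp only [Set.mem_inter_iff, Set.mem_Iio, Set.mem_Ioc, Set.mem_Ioo]
    constructor
    · rintro ⟨h1, h2, _⟩; exact ⟨h2, h1⟩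
    · rintro ⟨h1, h2⟩; exact ⟨h2, h1, le_trans h2.le hs.2⟩
  -- slice function as indicator
  have hsliceEq : ∀ s : ℝ, (fun t => K (t, s))
      = Set.indicator (Set.Iio s) (fun t => (t-x)^(p-1) * (s-t)^(q-1) * φ s) := by
    intro s; funext t
    by_cases h : t < s <;> simp [hK, h, Set.indicator, Set.mem_Iio]
  have hslice : ∀ s ∈ Set.Ioc x b,
      Integrable (fun t => K (t, s)) (volume.restrict (Set.Ioc x b)) := by
    intro s hs
    rw [hsliceEq s, integrable_indicator_iff measurableSet_Iio, IntegrableOn,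
      Measure.restrict_restrict measurableSet_Iio, hIio s hs]
    exact (hkerint s hs).mul_const (φ s)
  -- the t-integral of each slice
  have hsliceInt : ∀ s ∈ Set.Ioc x b,
      (∫ t in Set.Ioc x b, K (t, s)) = B * ((s-x)^(p+q-1) * φ s) := by
    intro s hs
    rw [hsliceEq s, MeasureTheory.integral_indicator measurableSet_Iio,
      Measure.restrict_restrict measurableSet_Iio, hIio s hs,
      MeasureTheory.integral_mul_const, hker s hs]
    ring
  -- norm integral of each slice
  have hnorm : ∀ s ∈ Set.Ioc x b,
      (∫ t in Set.Ioc x b, ‖K (t, s)‖) = ((s-x)^(p+q-1) * B) * |φ s| := by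
    intro s hs
    have hne : (fun t => ‖K (t, s)‖)
        = Set.indicator (Set.Iio s) (fun t => ‖(t-x)^(p-1) * (s-t)^(q-1) * φ s‖) := by
      funext t; by_cases h : t < s <;> simp [hK, h, Set.indicator, Set.mem_Iio]
    rw [hne, MeasureTheory.integral_indicator measurableSet_Iio,
      Measure.restrict_restrict measurableSet_Iio, hIio s hs]
    have heq : ∫ t in Set.Ioo x s, ‖(t-x)^(p-1) * (s-t)^(q-1) * φ s‖
        = ∫ t in Set.Ioo x s, ((t-x)^(p-1) * (s-t)^(q-1)) * |φ s| := by
      refine setIntegral_congr_fun measurableSet_Ioo fun t ht => ?_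
      have h1 : (0:ℝ) < t - x := by simp only [Set.mem_Ioo] at ht; linarith [ht.1]
      have h2 : (0:ℝ) < s - t := by simp only [Set.mem_Ioo] at ht; linarith [ht.2]
      rw [Real.norm_eq_abs, abs_mul, abs_mul,
        abs_of_pos (Real.rpow_pos_of_pos h1 _), abs_of_pos (Real.rpow_pos_of_pos h2 _)]
    rw [heq, MeasureTheory.integral_mul_const, hker s hs]
  -- integrability of K on the product
  have hKint : Integrable K
      ((volume.restrict (Set.Ioc x b)).prod (volume.restrict (Set.Ioc x b))) := by
    refine (integrable_prod_iff' hKm).mpr ⟨?_, ?_⟩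
    · filter_upwards [ae_restrict_mem measurableSet_Ioc] with s hs using hslice s hs
    · refine Integrable.mono' (hφ.abs.const_mul ((b-x)^(p+q-1) * B)) ?_ ?_
      · simpa using hKm.norm.prod_swap.integral_prod_right'
      · filter_upwards [ae_restrict_mem measurableSet_Ioc] with s hs
        have h0x : (0:ℝ) ≤ s - x := by linarith [hs.1]
        rw [hnorm s hs, Real.norm_eq_abs, abs_of_nonneg
          (mul_nonneg (mul_nonneg (Real.rpow_nonneg h0x _) hB0.le) (abs_nonneg _))]
        have hle : (s-x)^(p+q-1) ≤ (b-x)^(p+q-1) :=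
          Real.rpow_le_rpow h0x (by linarith [hs.2]) (by linarith)
        exact mul_le_mul_of_nonneg_right
          (mul_le_mul_of_nonneg_right hle hB0.le) (abs_nonneg _)
  -- Fubini
  have hswap : (∫ t in Set.Ioc x b, (∫ s in Set.Ioc x b, K (t, s)))
      = ∫ s in Set.Ioc x b, (∫ t in Set.Ioc x b, K (t, s)) :=
    MeasureTheory.integral_integral_swap (f := fun t s => K (t, s)) hKint
  -- identify LHS
  have hL : (∫ t in Set.Ioc x b, (∫ s in Set.Ioc x b, K (t, s)))
      = ∫ t in x..b, (t-x) ^ (p-1) * ∫ s in t..b, (s-t) ^ (q-1) * φ s := by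
    rw [intervalIntegral.integral_of_le hxb.le]
    refine setIntegral_congr_fun measurableSet_Ioc fun t ht => ?_
    have hind : (fun s => K (t, s))
        = Set.indicator (Set.Ioi t) (fun s => (t-x)^(p-1) * ((s-t)^(q-1) * φ s)) := by
      funext s; by_cases h : t < s <;> simp [hK, h, Set.indicator, Set.mem_Ioi, mul_assoc]
    have hIoi : Set.Ioi t ∩ Set.Ioc x b = Set.Ioc t b := by
      ext u
      simp only [Set.mem_inter_iff, Set.mem_Ioi, Set.mem_Ioc]
      constructor
      · rintro ⟨h1, _, h3⟩; exact ⟨h1, h3⟩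
      · rintro ⟨h1, h2⟩; exact ⟨h1, lt_trans ht.1 h1, h2⟩
    rw [hind, MeasureTheory.integral_indicator measurableSet_Ioi,
      Measure.restrict_restrict measurableSet_Ioi, hIoi,
      MeasureTheory.integral_const_mul, ← intervalIntegral.integral_of_le ht.2]
  -- identify RHS
  have hR : (∫ s in Set.Ioc x b, (∫ t in Set.Ioc x b, K (t, s)))
      = B * ∫ s in x..b, (s-x) ^ (p+q-1) * φ s := by
    rw [intervalIntegral.integral_of_le hxb.le, ← MeasureTheory.integral_const_mul]
    exact setIntegral_congr_fun measurableSet_Ioc fun s hs => hsliceInt s hs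
  rw [← hL, hswap, hR]

lemma ftc_iterated {n : ℕ} {a b : ℝ} (hab : a < b) {f : ℝ → ℝ}
    (hcd : ContDiffOn ℝ (n+1 : ℕ) f (Set.Icc a b)) :
    ∀ y ∈ Set.Icc a b, iteratedDerivWithin n f (Set.Icc a b) y
      = iteratedDerivWithin n f (Set.Icc a b) a
        + ∫ t in a..y, iteratedDerivWithin (n+1) f (Set.Icc a b) t := by
  have hu : UniqueDiffOn ℝ (Set.Icc a b) := uniqueDiffOn_Icc hab
  have hconts : ContinuousOn (iteratedDerivWithin n f (Set.Icc a b)) (Set.Icc a b) :=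
    hcd.continuousOn_iteratedDerivWithin (by exact_mod_cast Nat.le_succ n) hu
  have hcont1 : ContinuousOn (iteratedDerivWithin (n+1) f (Set.Icc a b)) (Set.Icc a b) :=
    hcd.continuousOn_iteratedDerivWithin le_rfl hu
  have hdiff : DifferentiableOn ℝ (iteratedDerivWithin n f (Set.Icc a b)) (Set.Icc a b) :=
    hcd.differentiableOn_iteratedDerivWithin (by exact_mod_cast Nat.lt_succ_self n) hu
  intro y hy
  have key : ∫ t in a..y, iteratedDerivWithin (n+1) f (Set.Icc a b) t
      = iteratedDerivWithin n f (Set.Icc a b) y - iteratedDerivWithin n f (Set.Icc a b) a := by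
    refine intervalIntegral.integral_eq_sub_of_hasDeriv_right_of_le hy.1
      (hconts.mono (Set.Icc_subset_Icc le_rfl hy.2)) (fun t ht => ?_) ?_
    · have ht' : t ∈ Set.Icc a b := ⟨ht.1.le, le_trans ht.2.le hy.2⟩
      have htlt : a < t ∧ t < b := ⟨ht.1, lt_of_lt_of_le ht.2 hy.2⟩
      have h1 := (hdiff t ht').hasDerivWithinAt
      have h2 : HasDerivAt (iteratedDerivWithin n f (Set.Icc a b))
          (derivWithin (iteratedDerivWithin n f (Set.Icc a b)) (Set.Icc a b) t) t :=
        h1.hasDerivAt (Icc_mem_nhds htlt.1 htlt.2)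
      have h3 : derivWithin (iteratedDerivWithin n f (Set.Icc a b)) (Set.Icc a b) t
          = iteratedDerivWithin (n+1) f (Set.Icc a b) t :=
        (congrFun iteratedDerivWithin_succ t).symm
      rw [← h3]
      exact h2.hasDerivWithinAt
    · exact (hcont1.mono (Set.Icc_subset_Icc le_rfl hy.2)).intervalIntegrable_of_Icc hy.1
  rw [key]; ring

lemma isACDeriv_of_succ {m : ℕ} (hm : 1 ≤ m) {a b : ℝ} (hab : a < b) {f : ℝ → ℝ}
    (h : IsACDeriv (m+1) a b f) : IsACDeriv m a b f := by
  have hu : UniqueDiffOn ℝ (Set.Icc a b) := uniqueDiffOn_Icc hab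
  have hcd : ContDiffOn ℝ (m : ℕ) f (Set.Icc a b) := by
    have := h.1; simpa using this
  refine ⟨hcd.of_le (by exact_mod_cast Nat.sub_le m 1), ?_, ?_⟩
  · have hcont : ContinuousOn (iteratedDerivWithin m f (Set.Icc a b)) (Set.Icc a b) :=
      hcd.continuousOn_iteratedDerivWithin le_rfl hu
    exact hcont.intervalIntegrable_of_Icc hab.le
  · have hcd' : ContDiffOn ℝ ((m-1)+1 : ℕ) f (Set.Icc a b) := by
      rwa [Nat.sub_add_cancel hm]
    have := ftc_iterated hab hcd'
    rwa [Nat.sub_add_cancel hm] at this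

lemma mem_uIcc_sub {a b u v : ℝ} (hab : a ≤ b) (hu : u ∈ Set.Icc a b) (hv : v ∈ Set.Icc a b) :
    Set.uIcc u v ⊆ Set.uIcc a b :=
  Set.uIcc_subset_uIcc (by rw [Set.uIcc_of_le hab]; exact hu) (by rw [Set.uIcc_of_le hab]; exact hv)

lemma gamma_nat_fact {m : ℕ} (hm : 1 ≤ m) :
    Real.Gamma (m : ℝ) = (Nat.factorial (m-1) : ℝ) := by
  rw [show (m:ℝ) = ((m-1 : ℕ):ℝ) + 1 by rw [Nat.cast_sub hm]; push_cast; ring]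
  exact Real.Gamma_nat_eq_factorial _

lemma taylor_AC {a b : ℝ} (hab : a < b) {f : ℝ → ℝ} (m : ℕ) (hm : 1 ≤ m) :
    IsACDeriv m a b f →
    (∀ k : ℕ, 1 ≤ k → k < m → iteratedDerivWithin k f (Set.Icc a b) b = 0) →
    ∀ x ∈ Set.Icc a b,
    f x - f b = ((-1:ℝ)^m / (Nat.factorial (m-1) : ℝ)) *
      ∫ s in x..b, (s - x)^(m-1) * iteratedDerivWithin m f (Set.Icc a b) s := by
  induction m, hm using Nat.le_induction with
  | base =>
    intro hf _ x hx
    obtain ⟨-, hint, hftc⟩ := hf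
    have h1 := hftc x hx
    have h2 := hftc b (Set.right_mem_Icc.mpr hab.le)
    simp only [show (1-1 : ℕ) = 0 from rfl, iteratedDerivWithin_zero] at h1 h2
    have hax : IntervalIntegrable (iteratedDerivWithin 1 f (Set.Icc a b)) volume a x :=
      hint.mono_set (mem_uIcc_sub hab.le (Set.left_mem_Icc.mpr hab.le) hx)
    have hxb : IntervalIntegrable (iteratedDerivWithin 1 f (Set.Icc a b)) volume x b :=
      hint.mono_set (mem_uIcc_sub hab.le hx (Set.right_mem_Icc.mpr hab.le))
    have hadd := intervalIntegral.integral_add_adjacent_intervals hax hxb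
    simp only [show (1-1 : ℕ) = 0 from rfl, pow_zero, one_mul, pow_one, Nat.factorial_zero,
      Nat.cast_one]
    linarith
  | succ m hm IH =>
    intro hf hfb x hx
    have hbm : b ∈ Set.Icc a b := Set.right_mem_Icc.mpr hab.le
    obtain ⟨hcd', hint, hftc⟩ := hf
    simp only [Nat.add_sub_cancel] at hftc
    have hAC : IsACDeriv m a b f := isACDeriv_of_succ hm hab ⟨hcd', hint, hftc⟩
    have hfb' : ∀ k : ℕ, 1 ≤ k → k < m → iteratedDerivWithin k f (Set.Icc a b) b = 0 :=
      fun k h1 h2 => hfb k h1 (by omega)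
    have hIH := IH hAC hfb' x hx
    have hDmb : iteratedDerivWithin m f (Set.Icc a b) b = 0 := hfb m hm (by omega)
    set φ := iteratedDerivWithin (m+1) f (Set.Icc a b) with hφ
    have hrep : ∀ s ∈ Set.Icc a b,
        iteratedDerivWithin m f (Set.Icc a b) s = -(∫ u in s..b, φ u) := by
      intro s hs
      have h1 := hftc s hs
      have h2 := hftc b hbm
      have hsplit := intervalIntegral.integral_add_adjacent_intervals
        (hint.mono_set (mem_uIcc_sub hab.le (Set.left_mem_Icc.mpr hab.le) hs))
        (hint.mono_set (mem_uIcc_sub hab.le hs hbm))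
      rw [hDmb] at h2
      rw [h1]
      linarith
    rcases eq_or_lt_of_le hx.2 with hxb | hxb
    · rw [hxb]
      simp
    · have hφint : IntegrableOn φ (Set.Ioc x b) :=
        (intervalIntegrable_iff_integrableOn_Ioc_of_le hxb.le).mp
          (hint.mono_set (mem_uIcc_sub hab.le hx hbm))
      have hmpos : (0:ℝ) < (m:ℝ) := by exact_mod_cast hm
      have hfub := fubini_kernel (p := (m:ℝ)) (q := 1) hmpos one_pos
        (by linarith) hxb hφint
      -- convert rpow to pow
      have hc1 : ∀ u : ℝ, u ^ ((m:ℝ)-1) = u ^ (m-1 : ℕ) := fun u => by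
        rw [show (m:ℝ)-1 = ((m-1:ℕ):ℝ) by rw [Nat.cast_sub hm, Nat.cast_one], Real.rpow_natCast]
      have hc2 : ∀ u : ℝ, u ^ ((m:ℝ)+1-1) = u ^ (m : ℕ) := fun u => by
        rw [show (m:ℝ)+1-1 = (m:ℝ) by ring, Real.rpow_natCast]
      simp only [sub_self, Real.rpow_zero, one_mul, hc1, hc2, Real.Gamma_one, mul_one,
        gamma_nat_fact hm, show (m:ℝ)+1 = ((m:ℕ):ℝ)+1 from rfl,
        Real.Gamma_nat_eq_factorial] at hfub
      have hIH' : f x - f b = -(((-1:ℝ)^m / (Nat.factorial (m-1) : ℝ)) *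
          ∫ s in x..b, (s-x)^(m-1 : ℕ) * ∫ u in s..b, φ u) := by
        rw [hIH, ← mul_neg, ← intervalIntegral.integral_neg]
        congr 1
        refine intervalIntegral.integral_congr fun s hs => ?_
        rw [Set.uIcc_of_le hxb.le] at hs
        have hs' : s ∈ Set.Icc a b := ⟨le_trans hx.1 hs.1, hs.2⟩
        rw [hrep s hs']
        ring
      rw [hIH', hfub]
      simp only [Nat.add_sub_cancel]
      have hf1 : (Nat.factorial (m-1) : ℝ) ≠ 0 := by
        exact_mod_cast Nat.factorial_ne_zero _
      have hf2 : (Nat.factorial m : ℝ) ≠ 0 := by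
        exact_mod_cast Nat.factorial_ne_zero _
      field_simp
      ring

/-- If `f ∈ AC^m([a,b])` with `m = ⌈α⌉` and `f⁽ᵏ⁾(b) = 0` for `k = 1, …, m-1`, then for
every `x ∈ [a,b]`, `f(x) - f(b) = (1/Γ(α)) ∫_x^b (t-x)^{α-1} D_{b-}^α f(t) dt`. -/
theorem rightCaputo_sub_eq_integral (α : ℝ) (hα : 0 < α) (a b : ℝ) (hab : a < b) (f : ℝ → ℝ)
    (hf : IsACDeriv ⌈α⌉₊ a b f)
    (hfb : ∀ k : ℕ, 1 ≤ k → k < ⌈α⌉₊ → iteratedDerivWithin k f (Set.Icc a b) b = 0)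
    (x : ℝ) (hx : x ∈ Set.Icc a b) :
    f x - f b = (1 / Real.Gamma α) * ∫ t in x..b, (t - x) ^ (α - 1) * rightCaputoDeriv α a b f t := by
  set m := ⌈α⌉₊ with hmdef
  have hm1 : 1 ≤ m := Nat.one_le_iff_ne_zero.mpr (by
    simp only [hmdef, ne_eq, Nat.ceil_eq_zero, not_le]; exact hα)
  have hαm : α ≤ (m : ℝ) := Nat.le_ceil α
  have hm1α : (m : ℝ) - 1 < α := by
    have h := Nat.ceil_lt_add_one hα.le
    rw [← hmdef] at h
    linarith
  set D := iteratedDerivWithin m f (Set.Icc a b) with hD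
  have hT := taylor_AC hab m hm1 hf hfb x hx
  have hGα : 0 < Real.Gamma α := Real.Gamma_pos_of_pos hα
  have hfact : (Nat.factorial (m-1) : ℝ) ≠ 0 := by exact_mod_cast Nat.factorial_ne_zero _
  have hc1 : ∀ u : ℝ, u ^ ((m:ℝ)-1) = u ^ (m-1 : ℕ) := fun u => by
    rw [show (m:ℝ)-1 = ((m-1:ℕ):ℝ) by rw [Nat.cast_sub hm1, Nat.cast_one], Real.rpow_natCast]
  rcases eq_or_lt_of_le hx.2 with hxb | hxb
  · rw [hxb]; simp
  by_cases hint : α = (m : ℝ)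
  · -- integer case
    have hgm : Real.Gamma α = (Nat.factorial (m-1) : ℝ) := by
      rw [hint]; exact gamma_nat_fact hm1
    have : (∫ t in x..b, (t - x) ^ (α - 1) * rightCaputoDeriv α a b f t)
        = (-1:ℝ)^m * ∫ t in x..b, (t - x) ^ (m-1 : ℕ) * D t := by
      rw [← intervalIntegral.integral_const_mul]
      refine intervalIntegral.integral_congr fun t ht => ?_
      rw [rightCaputoDeriv]
      rw [if_pos (by rw [← hmdef, ← hint])]
      rw [show α - 1 = (m:ℝ) - 1 by rw [hint], hc1]
      rw [← hmdef, ← hD]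
      ring
    rw [this, hgm, hT]
    ring
  · -- fractional case
    have hαlt : α < (m : ℝ) := lt_of_le_of_ne hαm hint
    have hq : 0 < (m:ℝ) - α := by linarith
    have hGq : 0 < Real.Gamma ((m:ℝ) - α) := Real.Gamma_pos_of_pos hq
    have hGm : Real.Gamma ((m:ℝ)) = (Nat.factorial (m-1) : ℝ) := gamma_nat_fact hm1
    have hφint : IntegrableOn D (Set.Ioc x b) :=
      (intervalIntegrable_iff_integrableOn_Ioc_of_le hxb.le).mp
        (hf.2.1.mono_set (mem_uIcc_sub hab.le hx (Set.right_mem_Icc.mpr hab.le)))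
    have hfub := fubini_kernel (p := α) (q := (m:ℝ) - α) hα hq
      (by push_cast; linarith [Nat.one_le_cast (α := ℝ) |>.mpr hm1]) hxb hφint
    have hstep : (∫ t in x..b, (t - x) ^ (α - 1) * rightCaputoDeriv α a b f t)
        = ((-1:ℝ)^m / Real.Gamma ((m:ℝ) - α)) *
          ∫ t in x..b, (t-x) ^ (α-1) * ∫ s in t..b, (s-t) ^ ((m:ℝ) - α - 1) * D s := by
      rw [← intervalIntegral.integral_const_mul]
      refine intervalIntegral.integral_congr fun t ht => ?_
      rw [rightCaputoDeriv, if_neg (by rw [← hmdef]; exact hint), ← hmdef, ← hD]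
      ring
    have e1 : α + ((m:ℝ) - α) = (m:ℝ) := by ring
    rw [e1] at hfub
    simp only [hc1] at hfub
    rw [hstep, hfub, hT, hGm]
    field_simp
    ring
end
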